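/- arXiv:2212.13003 — 3 statements merged into one kernel-verified Lean document; each statement's English description precedes it below -/
import Mathlib

section
/- For every integer n ≥ 2 and every vertex u of the BCDC network B_n, the subgraph of B_n induced by the neighborhood N_{B_n}(u) is the disjoint union of two complete graphs K_{n−1} with no edges between them. -/
open SimpleGraph

/-! ## Structure connectivity -/

/-- The set of vertices covered by a family of subgraphs of `G`. -/
def SimpleGraph.cutVerts {V : Type*} {G : SimpleGraph V} (F : Finset G.Subgraph) : Set V :=
  ⋃ A ∈ F, A.verts

/-- A family `F` of subgraphs of `G` is a subgraph cut if deleting all vertices of members of `F`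
leaves a graph that is disconnected or has at most one vertex. -/
def SimpleGraph.IsSubgraphCut {V : Type*} (G : SimpleGraph V) (F : Finset G.Subgraph) : Prop :=
  ¬ (G.induce (SimpleGraph.cutVerts F)ᶜ).Connected ∨ ((SimpleGraph.cutVerts F)ᶜ : Set V).Subsingleton

/-- An `H`-structure cut of `G`: a subgraph cut all of whose members are isomorphic to `H`. -/
def SimpleGraph.IsStructureCut {V W : Type*} (G : SimpleGraph V) (H : SimpleGraph W)
    (F : Finset G.Subgraph) : Prop :=
  G.IsSubgraphCut F ∧ ∀ A ∈ F, Nonempty (A.coe ≃g H)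

/-- An `H`-substructure cut of `G`: a subgraph cut all of whose members are isomorphic to a
connected subgraph of `H`. -/
def SimpleGraph.IsSubstructureCut {V W : Type*} (G : SimpleGraph V) (H : SimpleGraph W)
    (F : Finset G.Subgraph) : Prop :=
  G.IsSubgraphCut F ∧ ∀ A ∈ F, ∃ K : H.Subgraph, K.Connected ∧ Nonempty (A.coe ≃g K.coe)

/-- The `H`-structure connectivity `κ(G; H)`. -/
noncomputable def SimpleGraph.structConn {V W : Type*} (G : SimpleGraph V) (H : SimpleGraph W) : ℕ :=
  sInf {k | ∃ F : Finset G.Subgraph, G.IsStructureCut H F ∧ F.card = k}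

/-- The `H`-substructure connectivity `κˢ(G; H)`. -/
noncomputable def SimpleGraph.substructConn {V W : Type*} (G : SimpleGraph V) (H : SimpleGraph W) : ℕ :=
  sInf {k | ∃ F : Finset G.Subgraph, G.IsSubstructureCut H F ∧ F.card = k}

/-- The star `K_{1,t}` with center `0` and `t` leaves. -/
def starGraph (t : ℕ) : SimpleGraph (Fin (t + 1)) :=
  SimpleGraph.fromRel (fun i _ => i = 0)
/-! ## The crossed cube and the BCDC network -/

/-- Binary strings of length `n` (`CQVertex (n+1) = Bool × CQVertex n`,
the first component being the leading bit `x_n`). -/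
def CQVertex : ℕ → Type
  | 0 => Unit
  | n + 1 => Bool × CQVertex n

/-- The `i`-th bit `x_i` of a binary string `x = x_{n-1} … x_1 x_0`. -/
def CQbit : (n : ℕ) → CQVertex n → ℕ → Bool
  | 0, _, _ => false
  | n + 1, x, i => if i = n then x.1 else CQbit n x.2 i

/-- Two binary strings `x = x_1 x_0` and `y = y_1 y_0` are pair related iff
`(x, y) ∈ {(00,00), (10,10), (01,11), (11,01)}`. -/
def pairRel (x1 x0 y1 y0 : Bool) : Prop :=
  (x0 = false ∧ y0 = false ∧ y1 = x1) ∨ (x0 = true ∧ y0 = true ∧ y1 = !x1)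

/-- The adjacency relation of the `n`-dimensional crossed cube: `CQ_1 = K_2`, and
`u = 0u_{n-2}…u_0`, `v = 1v_{n-2}…v_0` are adjacent in `CQ_n` iff (i) `u_{n-2} = v_{n-2}`
whenever `n` is even, and (ii) `u_{2i+1}u_{2i} ∼ v_{2i+1}v_{2i}` for all `0 ≤ i < ⌊(n-1)/2⌋`. -/
def CQrel : (n : ℕ) → CQVertex n → CQVertex n → Prop
  | 0, _, _ => False
  | n + 1, u, v =>
      (u.1 = v.1 ∧ CQrel n u.2 v.2) ∨
      (u.1 ≠ v.1 ∧
        ((n + 1) % 2 = 0 → CQbit n u.2 (n - 1) = CQbit n v.2 (n - 1)) ∧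
        ∀ i < n / 2, pairRel (CQbit n u.2 (2 * i + 1)) (CQbit n u.2 (2 * i))
          (CQbit n v.2 (2 * i + 1)) (CQbit n v.2 (2 * i)))

/-- The `n`-dimensional crossed cube `CQ_n`. -/
def crossedCube (n : ℕ) : SimpleGraph (CQVertex n) :=
  SimpleGraph.fromRel (CQrel n)

/-- The `n`-dimensional BCDC network `B_n`: the line graph of the crossed cube `CQ_n`. -/
def BCDC (n : ℕ) : SimpleGraph (crossedCube n).edgeSet :=
  (crossedCube n).lineGraph

/-! ## Auxiliary development -/

/-- Build a binary string of length `n` from a bit function. -/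
def ofBits : (n : ℕ) → (ℕ → Bool) → CQVertex n
  | 0, _ => ()
  | n + 1, f => (f n, ofBits n f)

lemma cqbit_ofBits : ∀ (n : ℕ) (f : ℕ → Bool) (i : ℕ), i < n → CQbit n (ofBits n f) i = f i
  | 0, _, _, h => absurd h (Nat.not_lt_zero _)
  | n + 1, f, i, h => by
    by_cases hi : i = n
    · simp [ofBits, CQbit, hi]
    · simp only [ofBits, CQbit, if_neg hi]
      exact cqbit_ofBits n f i (by omega)

lemma cqvertex_ext : ∀ (n : ℕ) (x y : CQVertex n),
    (∀ i < n, CQbit n x i = CQbit n y i) → x = y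
  | 0, x, y, _ => rfl
  | n + 1, x, y, h => by
    have h1 : x.1 = y.1 := by
      have := h n (by omega); simpa [CQbit] using this
    have h2 : x.2 = y.2 := by
      refine cqvertex_ext n x.2 y.2 fun i hi => ?_
      have := h i (by omega)
      simp only [CQbit, if_neg (show ¬ i = n by omega)] at this
      exact this
    exact Prod.ext h1 h2

/-- The unique cross neighbor map. -/
def cm (n : ℕ) (x : CQVertex n) : CQVertex n :=
  ofBits n fun i => if i % 2 = 0 then CQbit n x i else xor (CQbit n x i) (CQbit n x (i - 1))

lemma cqbit_cm_even {n i : ℕ} (x : CQVertex n) (hi : i < n) (h2 : i % 2 = 0) :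
    CQbit n (cm n x) i = CQbit n x i := by
  rw [cm, cqbit_ofBits n _ i hi, if_pos h2]

lemma cqbit_cm_odd {n i : ℕ} (x : CQVertex n) (hi : i < n) (h2 : i % 2 = 1) :
    CQbit n (cm n x) i = xor (CQbit n x i) (CQbit n x (i - 1)) := by
  rw [cm, cqbit_ofBits n _ i hi, if_neg (by omega)]

lemma cm_cm (n : ℕ) (x : CQVertex n) : cm n (cm n x) = x := by
  refine cqvertex_ext n _ _ fun i hi => ?_
  rcases Nat.even_or_odd i with h2 | h2
  · rw [cqbit_cm_even _ hi (Nat.even_iff.mp h2), cqbit_cm_even _ hi (Nat.even_iff.mp h2)]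
  · have h2 := Nat.odd_iff.mp h2
    have hi1 : i - 1 < n := by omega
    rw [cqbit_cm_odd _ hi h2, cqbit_cm_odd _ hi h2,
      cqbit_cm_even _ hi1 (by omega), Bool.xor_assoc, Bool.xor_self, Bool.xor_false]

lemma cm_injective (n : ℕ) : Function.Injective (cm n) := by
  intro x y h
  have := congrArg (cm n) h
  rwa [cm_cm, cm_cm] at this

lemma pairRel_iff (x1 x0 y1 y0 : Bool) :
    pairRel x1 x0 y1 y0 ↔ y0 = x0 ∧ y1 = xor x1 x0 := by
  unfold pairRel
  cases x0 <;> cases y0 <;> cases x1 <;> cases y1 <;> simp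

/-- The cross condition appearing in `CQrel`. -/
def crossCond (n : ℕ) (x y : CQVertex n) : Prop :=
  ((n + 1) % 2 = 0 → CQbit n x (n - 1) = CQbit n y (n - 1)) ∧
  ∀ i < n / 2, pairRel (CQbit n x (2 * i + 1)) (CQbit n x (2 * i))
    (CQbit n y (2 * i + 1)) (CQbit n y (2 * i))

lemma crossCond_iff (n : ℕ) (x y : CQVertex n) : crossCond n x y ↔ y = cm n x := by
  constructor
  · rintro ⟨hpar, hpr⟩
    refine cqvertex_ext n _ _ fun i hi => ?_
    rcases Nat.even_or_odd i with h2 | h2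
    · have h2 := Nat.even_iff.mp h2
      rw [cqbit_cm_even _ hi h2]
      by_cases htop : n % 2 = 1 ∧ i = n - 1
      · have := hpar (by omega)
        rw [← htop.2] at this
        exact this.symm
      · have hj : i / 2 < n / 2 := by omega
        have := (pairRel_iff _ _ _ _).mp (hpr (i / 2) hj)
        have h2i : 2 * (i / 2) = i := by omega
        rw [h2i] at this
        exact this.1
    · have h2 := Nat.odd_iff.mp h2
      have hj : i / 2 < n / 2 := by omega
      have := (pairRel_iff _ _ _ _).mp (hpr (i / 2) hj)
      have h2i : 2 * (i / 2) + 1 = i := by omega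
      have h2i' : 2 * (i / 2) = i - 1 := by omega
      rw [h2i, h2i'] at this
      rw [cqbit_cm_odd _ hi h2]
      exact this.2
  · rintro rfl
    constructor
    · intro hpar
      have h1 : n - 1 < n := by omega
      exact (cqbit_cm_even x h1 (by omega)).symm
    · intro i hi
      rw [pairRel_iff]
      have h0 : 2 * i < n := by omega
      have h1 : 2 * i + 1 < n := by omega
      refine ⟨cqbit_cm_even x h0 (by omega), ?_⟩
      rw [cqbit_cm_odd x h1 (by omega)]
      simp

lemma crossCond_symm {n : ℕ} {x y : CQVertex n} (h : crossCond n x y) : crossCond n y x := by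
  rw [crossCond_iff] at h ⊢
  rw [h, cm_cm]

/-- Structure of adjacency in `CQ_{n+1}`. -/
lemma adj_succ (n : ℕ) (u v : CQVertex (n + 1)) :
    (crossedCube (n + 1)).Adj u v ↔
      (u.1 = v.1 ∧ (crossedCube n).Adj u.2 v.2) ∨ (u.1 ≠ v.1 ∧ v.2 = cm n u.2) := by
  show (u ≠ v ∧ (CQrel (n+1) u v ∨ CQrel (n+1) v u)) ↔ _
  have hrel : ∀ a b : CQVertex (n+1), CQrel (n+1) a b ↔
      (a.1 = b.1 ∧ CQrel n a.2 b.2) ∨ (a.1 ≠ b.1 ∧ crossCond n a.2 b.2) := by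
    intro a b; rfl
  rw [hrel, hrel]
  constructor
  · rintro ⟨hne, h | h⟩
    · rcases h with ⟨h1, h2⟩ | ⟨h1, h2⟩
      · exact Or.inl ⟨h1, fun h => hne (Prod.ext h1 h), Or.inl h2⟩
      · exact Or.inr ⟨h1, (crossCond_iff n u.2 v.2).mp h2⟩
    · rcases h with ⟨h1, h2⟩ | ⟨h1, h2⟩
      · exact Or.inl ⟨h1.symm, fun h => hne (Prod.ext h1.symm h), Or.inr h2⟩
      · refine Or.inr ⟨fun h => h1 h.symm, ?_⟩
        have := (crossCond_iff n v.2 u.2).mp h2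
        rw [this, cm_cm]
  · rintro (⟨h1, h2⟩ | ⟨h1, h2⟩)
    · obtain ⟨hne2, hr⟩ := h2
      refine ⟨fun h => hne2 (congrArg Prod.snd h), ?_⟩
      rcases hr with hr | hr
      · exact Or.inl (Or.inl ⟨h1, hr⟩)
      · exact Or.inr (Or.inl ⟨h1.symm, hr⟩)
    · refine ⟨fun h => h1 (congrArg Prod.fst h), ?_⟩
      exact Or.inl (Or.inr ⟨h1, (crossCond_iff n u.2 v.2).mpr h2⟩)

/-- The `i`-th neighbor of a vertex in `CQ_n`. -/
def nbr : (n : ℕ) → CQVertex n → Fin n → CQVertex n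
  | 0, _, i => i.elim0
  | n + 1, x, i =>
      if h : (i : ℕ) < n then (x.1, nbr n x.2 ⟨i, h⟩) else (!x.1, cm n x.2)

lemma adj_iff : ∀ (n : ℕ) (u v : CQVertex n),
    (crossedCube n).Adj u v ↔ ∃ i : Fin n, v = nbr n u i
  | 0, u, v => by
    simp only [show (crossedCube 0) = SimpleGraph.fromRel (CQrel 0) from rfl]
    constructor
    · rintro ⟨_, h | h⟩ <;> exact h.elim
    · rintro ⟨i, _⟩; exact i.elim0
  | n + 1, u, v => by
    rw [adj_succ]
    constructor
    · rintro (⟨h1, h2⟩ | ⟨h1, h2⟩)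
      · obtain ⟨i, hi⟩ := (adj_iff n u.2 v.2).mp h2
        refine ⟨⟨i, by omega⟩, ?_⟩
        have : v = (u.1, nbr n u.2 i) := Prod.ext h1.symm hi
        rw [this]
        simp [nbr, i.isLt]
        rfl
      · refine ⟨⟨n, by omega⟩, ?_⟩
        have hb : u.1 ≠ v.1 → v.1 = !u.1 := by
          cases u.1 <;> cases v.1 <;> simp
        have : v = (!u.1, cm n u.2) := Prod.ext (hb h1) h2
        rw [this]
        simp [nbr]
        rfl
    · rintro ⟨i, rfl⟩
      by_cases h : (i : ℕ) < n
      · refine Or.inl ?_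
        simp only [nbr, h, ↓reduceDIte]
        exact ⟨by trivial, (adj_iff n u.2 _).mpr ⟨⟨i, h⟩, rfl⟩⟩
      · refine Or.inr ?_
        simp only [nbr, h, ↓reduceDIte]
        simp

lemma nbr_injective : ∀ (n : ℕ) (u : CQVertex n), Function.Injective (nbr n u)
  | 0, _ => fun {i} _ => i.elim0
  | n + 1, u => by
    intro i j h
    by_cases hi : (i : ℕ) < n <;> by_cases hj : (j : ℕ) < n <;>
      simp only [nbr, hi, hj, ↓reduceDIte] at h
    · have h2 := nbr_injective n u.2 (congrArg Prod.snd h)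
      simpa [Fin.ext_iff] using h2
    · exact absurd (congrArg Prod.fst h) (by simp)
    · exact absurd (congrArg Prod.fst h) (by simp)
    · have hi' := i.isLt
      have hj' := j.isLt
      exact Fin.ext (by omega)

lemma neighborSet_eq (n : ℕ) (u : CQVertex n) :
    (crossedCube n).neighborSet u = Set.range (nbr n u) := by
  ext v
  simp only [SimpleGraph.mem_neighborSet, adj_iff, Set.mem_range, eq_comm]

lemma ncard_neighborSet (n : ℕ) (u : CQVertex n) :
    ((crossedCube n).neighborSet u).ncard = n := by
  rw [neighborSet_eq, ← Nat.card_coe_set_eq,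
    Nat.card_range_of_injective (nbr_injective n u), Nat.card_eq_fintype_card, Fintype.card_fin]

lemma neighborSet_finite (n : ℕ) (u : CQVertex n) :
    ((crossedCube n).neighborSet u).Finite := by
  rw [neighborSet_eq]
  exact Set.finite_range _

/-- The crossed cube is triangle-free. -/
lemma cq_triangle_free : ∀ (n : ℕ) (u v w : CQVertex n),
    (crossedCube n).Adj u v → (crossedCube n).Adj v w → (crossedCube n).Adj u w → False
  | 0, u, v, w => by
    intro h
    rcases (adj_iff 0 u v).mp h with ⟨i, _⟩
    exact i.elim0
  | n + 1, u, v, w => by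
    intro huv hvw huw
    have h1 := (adj_succ n u v).mp huv
    have h2 := (adj_succ n v w).mp hvw
    have h3 := (adj_succ n u w).mp huw
    rcases h1 with ⟨e1, a1⟩ | ⟨e1, a1⟩ <;> rcases h2 with ⟨e2, a2⟩ | ⟨e2, a2⟩ <;>
      rcases h3 with ⟨e3, a3⟩ | ⟨e3, a3⟩
    · exact cq_triangle_free n u.2 v.2 w.2 a1 a2 a3
    · exact e3 (e1.trans e2)
    · exact e2 (e1.symm.trans e3)
    · have : u.2 = v.2 := cm_injective n (a3.symm.trans a2)
      exact huv.ne (Prod.ext e1 this)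
    · exact e1 (e3.trans e2.symm)
    · have : v.2 = w.2 := a1.trans a3.symm
      exact hvw.ne (Prod.ext e2 this)
    · have hwu : w.2 = u.2 := by rw [a2, a1, cm_cm]
      exact (crossedCube n).loopless.irrefl u.2 (hwu ▸ a3)
    · exact e3 (by revert e1 e2; cases u.1 <;> cases v.1 <;> cases w.1 <;> simp)

lemma edge_mem_char {n : ℕ} {a b : CQVertex n} (hab : (crossedCube n).Adj a b)
    (f : (crossedCube n).edgeSet) :
    (f ≠ ⟨s(a, b), hab⟩ ∧ a ∈ (f : Sym2 (CQVertex n))) ↔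
      ∃ c, (crossedCube n).Adj a c ∧ c ≠ b ∧ (f : Sym2 (CQVertex n)) = s(a, c) := by
  obtain ⟨z, hz⟩ := f
  constructor
  · rintro ⟨hne, ha⟩
    obtain ⟨c, rfl⟩ := Sym2.mem_iff_exists.mp ha
    refine ⟨c, hz, ?_, rfl⟩
    rintro rfl
    exact hne rfl
  · rintro ⟨c, hac, hcb, rfl⟩
    refine ⟨?_, Sym2.mem_iff.mpr (Or.inl rfl)⟩
    intro h
    exact hcb (Sym2.congr_right.mp (congrArg Subtype.val h))

lemma ncard_S {n : ℕ} {a b : CQVertex n} (hab : (crossedCube n).Adj a b) :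
    {f : (crossedCube n).edgeSet |
        f ≠ ⟨s(a, b), hab⟩ ∧ a ∈ (f : Sym2 (CQVertex n))}.ncard = n - 1 := by
  set S := {f : (crossedCube n).edgeSet | f ≠ ⟨s(a, b), hab⟩ ∧ a ∈ (f : Sym2 (CQVertex n))}
  have himg : Subtype.val '' S =
      (fun c => s(a, c)) '' ((crossedCube n).neighborSet a \ {b}) := by
    ext z
    constructor
    · rintro ⟨f, hf, rfl⟩
      obtain ⟨c, hac, hcb, hfz⟩ := (edge_mem_char hab f).mp hf
      exact ⟨c, ⟨hac, hcb⟩, hfz.symm⟩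
    · rintro ⟨c, ⟨hac, hcb⟩, rfl⟩
      refine ⟨⟨s(a, c), hac⟩, ?_, rfl⟩
      exact (edge_mem_char hab _).mpr ⟨c, hac, hcb, rfl⟩
  have h1 : S.ncard = (Subtype.val '' S).ncard :=
    (Set.ncard_image_of_injective S Subtype.val_injective).symm
  have h2 : ((fun c => s(a, c)) '' ((crossedCube n).neighborSet a \ {b})).ncard
      = ((crossedCube n).neighborSet a \ {b}).ncard :=
    Set.ncard_image_of_injective _ (fun c c' h => Sym2.congr_right.mp h)
  have hbmem : b ∈ (crossedCube n).neighborSet a := hab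
  rw [h1, himg, h2, Set.ncard_diff_singleton_of_mem hbmem,
    ncard_neighborSet]

/-- For `n ≥ 2` and every vertex `u` of `B_n`, the subgraph of `B_n` induced by the
neighborhood of `u` is the disjoint union of two complete graphs `K_{n-1}`
with no edges between them. -/
theorem bcdc_neighborhood_two_cliques (n : ℕ) (hn : 2 ≤ n) (u : (crossedCube n).edgeSet) :
    ∃ S T : Set (crossedCube n).edgeSet,
      S ∪ T = (BCDC n).neighborSet u ∧ Disjoint S T ∧
      S.ncard = n - 1 ∧ T.ncard = n - 1 ∧
      (∀ x ∈ S, ∀ y ∈ S, x ≠ y → (BCDC n).Adj x y) ∧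
      (∀ x ∈ T, ∀ y ∈ T, x ≠ y → (BCDC n).Adj x y) ∧
      (∀ x ∈ S, ∀ y ∈ T, ¬ (BCDC n).Adj x y) := by
  obtain ⟨e, he⟩ := u
  induction e using Sym2.ind with
  | _ a b =>
  have hab : (crossedCube n).Adj a b := he
  refine ⟨{f | f ≠ ⟨s(a, b), he⟩ ∧ a ∈ (f : Sym2 (CQVertex n))},
    {f | f ≠ ⟨s(a, b), he⟩ ∧ b ∈ (f : Sym2 (CQVertex n))}, ?_, ?_, ?_, ?_, ?_, ?_, ?_⟩
  · ext f
    show _ ∨ _ ↔ (crossedCube n).lineGraph.Adj _ f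
    rw [SimpleGraph.lineGraph_adj_iff_exists]
    constructor
    · rintro (⟨hne, ha⟩ | ⟨hne, hb⟩)
      · exact ⟨fun h => hne h.symm, a, Sym2.mem_iff.mpr (Or.inl rfl), ha⟩
      · exact ⟨fun h => hne h.symm, b, Sym2.mem_iff.mpr (Or.inr rfl), hb⟩
    · rintro ⟨hne, v, hv1, hv2⟩
      rcases Sym2.mem_iff.mp hv1 with rfl | rfl
      · exact Or.inl ⟨fun h => hne h.symm, hv2⟩
      · exact Or.inr ⟨fun h => hne h.symm, hv2⟩
  · rw [Set.disjoint_left]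
    rintro ⟨z, hz⟩ ⟨hne, ha⟩ ⟨-, hb⟩
    obtain ⟨c, rfl⟩ := Sym2.mem_iff_exists.mp ha
    rcases Sym2.mem_iff.mp hb with rfl | rfl
    · exact hab.ne rfl
    · exact hne rfl
  · exact ncard_S hab
  · have := ncard_S hab.symm
    have hflip : (⟨s(b, a), hab.symm⟩ : (crossedCube n).edgeSet) = ⟨s(a, b), he⟩ :=
      Subtype.ext (Sym2.eq_swap)
    rw [hflip] at this
    exact this
  · rintro x ⟨hx, hxa⟩ y ⟨hy, hya⟩ hxy
    show (crossedCube n).lineGraph.Adj x y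
    exact SimpleGraph.lineGraph_adj_iff_exists.mpr ⟨hxy, a, hxa, hya⟩
  · rintro x ⟨hx, hxb⟩ y ⟨hy, hyb⟩ hxy
    show (crossedCube n).lineGraph.Adj x y
    exact SimpleGraph.lineGraph_adj_iff_exists.mpr ⟨hxy, b, hxb, hyb⟩
  · rintro x hx y hy hadj
    obtain ⟨c, hac, hcb, hxc⟩ := (edge_mem_char hab x).mp hx
    have hflip : (⟨s(b, a), hab.symm⟩ : (crossedCube n).edgeSet) = ⟨s(a, b), he⟩ :=
      Subtype.ext (Sym2.eq_swap)
    obtain ⟨d, hbd, hda, hyd⟩ := (edge_mem_char hab.symm y).mp (by rw [hflip]; exact hy)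
    obtain ⟨hne, v, hv1, hv2⟩ := SimpleGraph.lineGraph_adj_iff_exists.mp hadj
    rw [hxc] at hv1
    rw [hyd] at hv2
    rcases Sym2.mem_iff.mp hv1 with rfl | rfl <;> rcases Sym2.mem_iff.mp hv2 with h | h
    · exact hab.ne h
    · exact hda h.symm
    · exact hcb h
    · subst h
      exact cq_triangle_free n a b v hab (hbd) hac
end

section
/- Let n ≥ 4 and 2 ≤ t ≤ 2n − 3 be integers, and let r be the remainder of n − 1 upon division by 1 + t. Then the K_{1,t}-structure connectivity of the BCDC network satisfies κ(B_n; K_{1,t}) ≤ (2n−4)/(1+t) + 1 if 2 ≤ t ≤ n − 3 and r = 1, and κ(B_n; K_{1,t}) ≤ 2⌈(n−1)/(1+t)⌉ otherwise. -/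
open SimpleGraph

namespace CQAux

/-- read bits as a function -/
def fromBits : (n : ℕ) → (ℕ → Bool) → CQVertex n
  | 0, _ => ()
  | n + 1, f => (f n, fromBits n f)

lemma bit_fromBits (n : ℕ) (f : ℕ → Bool) (i : ℕ) :
    CQbit n (fromBits n f) i = if i < n then f i else false := by
  induction n with
  | zero => simp [CQbit]
  | succ n ih =>
    show (if i = n then f n else CQbit n (fromBits n f) i) = _
    rcases eq_or_ne i n with rfl | h
    · simp
    · rw [if_neg h, ih]
      rcases lt_or_ge i n with h' | h'
      · rw [if_pos h', if_pos (by omega)]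
      · rw [if_neg (by omega), if_neg (by omega)]

lemma eq_iff_bits {n : ℕ} {x y : CQVertex n} :
    x = y ↔ ∀ i < n, CQbit n x i = CQbit n y i := by
  induction n with
  | zero =>
    constructor
    · rintro rfl; simp
    · intro _
      have h : ∀ a b : Unit, a = b := fun _ _ => rfl
      exact h x y
  | succ n ih =>
    constructor
    · rintro rfl _ _; rfl
    · intro h
      have hx : x = (x.1, x.2) := rfl
      have hy : y = (y.1, y.2) := rfl
      rw [hx, hy]
      show ((x.1, x.2) : Bool × CQVertex n) = (y.1, y.2)
      rw [Prod.ext_iff]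
      constructor
      · have := h n (by omega)
        simpa [CQbit] using this
      · rw [ih]
        intro i hi
        have := h i (by omega)
        simpa [CQbit, Nat.ne_of_lt hi] using this

lemma pairRel_symm {a b c d : Bool} (h : pairRel a b c d) : pairRel c d a b := by
  rcases h with ⟨h1, h2, h3⟩ | ⟨h1, h2, h3⟩
  · exact Or.inl ⟨h2, h1, h3.symm⟩
  · refine Or.inr ⟨h2, h1, ?_⟩; rw [h3]; simp

lemma cqrel_symm : ∀ (n : ℕ) (u v : CQVertex n), CQrel n u v → CQrel n v u := by
  intro n
  induction n with
  | zero => intro _ _ h; exact h.elim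
  | succ n ih =>
    rintro u v (⟨h1, h2⟩ | ⟨h1, h2, h3⟩)
    · exact Or.inl ⟨h1.symm, ih _ _ h2⟩
    · exact Or.inr ⟨h1.symm, fun h => (h2 h).symm, fun i hi => pairRel_symm (h3 i hi)⟩

/-- the bit function of the neighbour across dimension `k` -/
def nbrF (f : ℕ → Bool) (k : ℕ) : ℕ → Bool :=
  fun i => if k < i then f i else if i = k then !f i
    else if i % 2 = 1 then xor (f i) (f (i - 1)) else f i

lemma nbrF_congr {f g : ℕ → Bool} {k i : ℕ} (h1 : f i = g i) (h2 : f (i - 1) = g (i - 1))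
    (h3 : f k = g k) : nbrF f k i = nbrF g k i := by
  unfold nbrF
  split_ifs <;> simp [h1, h2, h3]

lemma cqrel_to_nbrF : ∀ (n : ℕ) (f : ℕ → Bool) (k : ℕ), k < n →
    CQrel n (fromBits n f) (fromBits n (nbrF f k)) := by
  intro n
  induction n with
  | zero => omega
  | succ n ih =>
    intro f k hk
    rcases lt_or_ge k n with h | h
    · -- recurse
      refine Or.inl ⟨?_, ih f k h⟩
      show f n = nbrF f k n
      unfold nbrF; rw [if_pos h]
    · have hkn : k = n := by omega
      subst hkn
      refine Or.inr ⟨?_, ?_, ?_⟩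
    -- leading bits differ
      · show f k ≠ nbrF f k k
        unfold nbrF; rw [if_neg (by omega), if_pos rfl]
        cases f k <;> simp
      · -- parity condition
        intro hpar
        have hred : ∀ g : ℕ → Bool, (fromBits (k+1) g).2 = fromBits k g := fun _ => rfl
        rw [hred, hred]
        have hodd : k % 2 = 1 := by omega
        rw [bit_fromBits, bit_fromBits]
        rcases Nat.eq_zero_or_pos k with rfl | hpos
        · simp
        · rw [if_pos (by omega), if_pos (by omega)]
          unfold nbrF
          rw [if_neg (by omega), if_neg (by omega), if_neg (by omega)]
      · -- pairs
        intro i hi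
        have hred : ∀ g : ℕ → Bool, (fromBits (k+1) g).2 = fromBits k g := fun _ => rfl
        rw [hred, hred, bit_fromBits, bit_fromBits, bit_fromBits, bit_fromBits,
          if_pos (by omega), if_pos (by omega), if_pos (by omega), if_pos (by omega)]
        have h1 : nbrF f k (2 * i + 1) = xor (f (2 * i + 1)) (f (2 * i)) := by
          unfold nbrF
          rw [if_neg (by omega), if_neg (by omega), if_pos (by omega)]
          congr 1
        have h2 : nbrF f k (2 * i) = f (2 * i) := by
          unfold nbrF
          rw [if_neg (by omega), if_neg (by omega), if_neg (by omega)]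
        rw [h1, h2]
        cases hb : f (2 * i)
        · exact Or.inl ⟨rfl, rfl, by simp⟩
        · exact Or.inr ⟨rfl, rfl, by simp⟩

end CQAux
namespace CQAux

/-- the neighbour of `x` across dimension `k` -/
def nbr (n : ℕ) (x : CQVertex n) (k : ℕ) : CQVertex n :=
  fromBits n (nbrF (CQbit n x) k)

lemma fromBits_bits (n : ℕ) (x : CQVertex n) : fromBits n (CQbit n x) = x := by
  rw [eq_iff_bits]
  intro i hi
  rw [bit_fromBits, if_pos hi]

lemma bit_nbr (n : ℕ) (x : CQVertex n) (k i : ℕ) :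
    CQbit n (nbr n x k) i = if i < n then nbrF (CQbit n x) k i else false := by
  rw [nbr, bit_fromBits]

lemma cqrel_nbr (n : ℕ) (x : CQVertex n) {k : ℕ} (hk : k < n) :
    CQrel n x (nbr n x k) := by
  have := cqrel_to_nbrF n (CQbit n x) k hk
  rwa [fromBits_bits] at this

lemma cqrel_eq_nbr : ∀ (n : ℕ) (u v : CQVertex n), CQrel n u v →
    ∃ k < n, ∀ i < n, CQbit n v i = nbrF (CQbit n u) k i := by
  intro n
  induction n with
  | zero => intro _ _ h; exact h.elim
  | succ n ih =>
    have hu : ∀ (w : CQVertex (n+1)) (j : ℕ), CQbit (n+1) w j = if j = n then w.1 else CQbit n w.2 j :=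
      fun _ _ => rfl
    rintro u v (⟨h1, h2⟩ | ⟨h1, h2, h3⟩)
    · obtain ⟨k, hk, hbits⟩ := ih u.2 v.2 h2
      refine ⟨k, by omega, fun i hi => ?_⟩
      rcases eq_or_ne i n with rfl | h
      · rw [hu v i, if_pos rfl]
        unfold nbrF
        rw [if_pos (by omega), hu u i, if_pos rfl, h1]
      · rw [hu v i, if_neg h, hbits i (by omega)]
        apply nbrF_congr
        · rw [hu u i, if_neg h]
        · rw [hu u (i-1), if_neg (by omega)]
        · rw [hu u k, if_neg (by omega)]
    · refine ⟨n, by omega, fun i hi => ?_⟩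
      rcases eq_or_ne i n with rfl | h
      · rw [hu v i, if_pos rfl]
        unfold nbrF
        rw [if_neg (by omega), if_pos rfl, hu u i, if_pos rfl]
        cases hb : u.1 <;> cases hb' : v.1 <;> simp_all
      · have hin : i < n := by omega
        have hnb : nbrF (CQbit (n+1) u) n i =
            if i % 2 = 1 then xor (CQbit n u.2 i) (CQbit n u.2 (i-1)) else CQbit n u.2 i := by
          unfold nbrF
          rw [if_neg (show ¬ (n < i) by omega), if_neg (show ¬ (i = n) by omega),
            hu u i, hu u (i-1), if_neg (show ¬ (i = n) by omega),
            if_neg (show ¬ (i - 1 = n) by omega)]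
        rw [hu v i, if_neg h, hnb]
        rcases Nat.even_or_odd i with he | ho
        · -- even bit
          obtain ⟨j, hj⟩ := he
          subst hj
          rw [if_neg (by omega)]
          rcases lt_or_ge (j + j + 1) n with hi1 | hi1
          · -- part of a pair
            have hjn : j < n / 2 := by omega
            have h2j : j + j = 2 * j := by omega
            rw [h2j]
            rcases h3 j hjn with ⟨ha, hb, _⟩ | ⟨ha, hb, _⟩ <;> rw [ha, hb]
          · -- top bit, parity condition; i = n - 1, n odd
            have hne : j + j = n - 1 := by omega
            have hodd : (n + 1) % 2 = 0 := by omega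
            rw [hne]
            exact (h2 hodd).symm
        · -- odd bit: top of a pair
          obtain ⟨j, hj⟩ := ho
          subst hj
          rw [if_pos (by omega)]
          have hjn : j < n / 2 := by omega
          have h1' : 2 * j + 1 - 1 = 2 * j := by omega
          rw [h1']
          rcases h3 j hjn with ⟨ha, hb, hc⟩ | ⟨ha, hb, hc⟩ <;>
            rw [hc, ha] <;> cases CQbit n u.2 (2 * j + 1) <;> simp

lemma cqrel_eq_nbr' (n : ℕ) (u v : CQVertex n) (h : CQrel n u v) :
    ∃ k < n, v = nbr n u k := by
  obtain ⟨k, hk, hb⟩ := cqrel_eq_nbr n u v h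
  refine ⟨k, hk, ?_⟩
  rw [eq_iff_bits]
  intro i hi
  rw [bit_nbr, if_pos hi]
  exact hb i hi

lemma bit_nbr_self {n : ℕ} (x : CQVertex n) {k : ℕ} (hk : k < n) :
    CQbit n (nbr n x k) k = !CQbit n x k := by
  rw [bit_nbr, if_pos hk]
  unfold nbrF
  rw [if_neg (by omega), if_pos rfl]

lemma nbr_ne {n : ℕ} (x : CQVertex n) {k : ℕ} (hk : k < n) : nbr n x k ≠ x := by
  intro h
  have := bit_nbr_self x hk
  rw [h] at this
  cases CQbit n x k <;> simp_all

lemma bit_nbr_gt {n : ℕ} (x : CQVertex n) {k i : ℕ} (hk : k < i) (hi : i < n) :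
    CQbit n (nbr n x k) i = CQbit n x i := by
  rw [bit_nbr, if_pos hi]
  unfold nbrF
  rw [if_pos hk]

lemma nbr_injective {n : ℕ} (x : CQVertex n) {k k' : ℕ} (hk : k < n) (hk' : k' < n)
    (h : nbr n x k = nbr n x k') : k = k' := by
  by_contra hne
  rcases Nat.lt_or_ge k k' with hlt | hge
  · have h1 := bit_nbr_gt x hlt hk'
    have h2 := bit_nbr_self x hk'
    rw [h] at h1
    rw [h1] at h2
    simp at h2
  · have hlt : k' < k := by omega
    have h1 := bit_nbr_gt x hlt hk
    have h2 := bit_nbr_self x hk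
    rw [← h] at h1
    rw [h1] at h2
    simp at h2

/-- full characterisation of crossed-cube adjacency -/
lemma adj_iff_nbr {n : ℕ} (u v : CQVertex n) :
    (crossedCube n).Adj u v ↔ ∃ k < n, v = nbr n u k := by
  constructor
  · rintro ⟨hne, h | h⟩
    · exact cqrel_eq_nbr' n u v h
    · exact cqrel_eq_nbr' n u v (cqrel_symm n v u h)
  · rintro ⟨k, hk, rfl⟩
    exact ⟨(nbr_ne u hk).symm, Or.inl (cqrel_nbr n u hk)⟩

end CQAux
namespace CQAux

/-- the all-zeroes vertex -/
def zV (n : ℕ) : CQVertex n := fromBits n (fun _ => false)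
/-- the vertex `0…01` -/
def wV (n : ℕ) : CQVertex n := nbr n (zV n) 0
/-- the vertex `0…010` -/
def e1V (n : ℕ) : CQVertex n := nbr n (zV n) 1
/-- the vertex `0…011` -/
def f1V (n : ℕ) : CQVertex n := nbr n (e1V n) 0

lemma bit_z (n i : ℕ) : CQbit n (zV n) i = false := by
  rw [zV, bit_fromBits]; exact ite_self _

lemma bit_nbr_of {n : ℕ} (x : CQVertex n) (b : ℕ → Bool) (hb : ∀ i, CQbit n x i = b i)
    (k i : ℕ) (hi : i < n) :
    CQbit n (nbr n x k) i = if k < i then b i else if i = k then !b i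
      else if i % 2 = 1 then xor (b i) (b (i - 1)) else b i := by
  rw [bit_nbr, if_pos hi]
  unfold nbrF
  simp only [hb]

lemma bit_w {n : ℕ} (hn : 0 < n) (i : ℕ) :
    CQbit n (wV n) i = if i = 0 then true else false := by
  rcases lt_or_ge i n with hi | hi
  · rw [wV, bit_nbr_of (zV n) _ (bit_z n) 0 i hi]
    split_ifs <;> first | rfl | (exfalso; omega) | simp
  · rw [wV, bit_nbr, if_neg (by omega), if_neg (by omega)]

lemma bit_e1 {n : ℕ} (hn : 1 < n) (i : ℕ) :
    CQbit n (e1V n) i = if i = 1 then true else false := by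
  rcases lt_or_ge i n with hi | hi
  · rw [e1V, bit_nbr_of (zV n) _ (bit_z n) 1 i hi]
    split_ifs <;> first | rfl | (exfalso; omega) | simp
  · rw [e1V, bit_nbr, if_neg (by omega), if_neg (by omega)]

lemma bit_f1 {n : ℕ} (hn : 1 < n) (i : ℕ) :
    CQbit n (f1V n) i = if i ≤ 1 then true else false := by
  rcases lt_or_ge i n with hi | hi
  · rw [f1V, bit_nbr_of (e1V n) _ (bit_e1 hn) 0 i hi]
    split_ifs <;> first | rfl | (exfalso; omega) | simp
  · rw [f1V, bit_nbr, if_neg (by omega), if_neg (by omega)]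

lemma bit_wk {n k : ℕ} (hk : 2 ≤ k) (hkn : k < n) (i : ℕ) :
    CQbit n (nbr n (wV n) k) i =
      if i = 0 ∨ i = 1 ∨ i = k then true else false := by
  rcases lt_or_ge i n with hi | hi
  · rw [bit_nbr_of (wV n) _ (bit_w (by omega)) k i hi]
    split_ifs <;> first | rfl | (exfalso; omega) | simp
  · rw [bit_nbr, if_neg (by omega), if_neg (by omega)]

lemma bit_e1k {n k : ℕ} (hk : 2 ≤ k) (hkn : k < n) (i : ℕ) :
    CQbit n (nbr n (e1V n) k) i =
      if i = 1 ∨ i = k then true else false := by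
  rcases lt_or_ge i n with hi | hi
  · rw [bit_nbr_of (e1V n) _ (bit_e1 (by omega)) k i hi]
    split_ifs <;> first | rfl | (exfalso; omega) | simp
  · rw [bit_nbr, if_neg (by omega), if_neg (by omega)]

lemma bit_f1k {n k : ℕ} (hk : 2 ≤ k) (hkn : k < n) (i : ℕ) :
    CQbit n (nbr n (f1V n) k) i =
      if i = 0 ∨ i = k then true else false := by
  rcases lt_or_ge i n with hi | hi
  · rw [bit_nbr_of (f1V n) _ (bit_f1 (by omega)) k i hi]
    split_ifs <;> first | rfl | (exfalso; omega) | simp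
  · rw [bit_nbr, if_neg (by omega), if_neg (by omega)]

lemma bit_zk {n k : ℕ} (hkn : k < n) (i : ℕ) :
    CQbit n (nbr n (zV n) k) i = if i = k then true else false := by
  rcases lt_or_ge i n with hi | hi
  · rw [bit_nbr_of (zV n) _ (bit_z n) k i hi]
    split_ifs <;> first | rfl | (exfalso; omega) | simp
  · rw [bit_nbr, if_neg (by omega), if_neg (by omega)]

lemma nbr_w0 {n : ℕ} (hn : 0 < n) : nbr n (wV n) 0 = zV n := by
  rw [eq_iff_bits]
  intro i hi
  rw [bit_z, bit_nbr_of (wV n) _ (bit_w hn) 0 i hi]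
  split_ifs <;> first | rfl | (exfalso; omega) | simp

lemma nbr_w1 {n : ℕ} (hn : 1 < n) : nbr n (wV n) 1 = f1V n := by
  rw [eq_iff_bits]
  intro i hi
  rw [bit_f1 hn, bit_nbr_of (wV n) _ (bit_w (by omega)) 1 i hi]
  split_ifs <;> first | rfl | (exfalso; omega) | simp

lemma nbr_e11 {n : ℕ} (hn : 1 < n) : nbr n (e1V n) 1 = zV n := by
  rw [eq_iff_bits]
  intro i hi
  rw [bit_z, bit_nbr_of (e1V n) _ (bit_e1 hn) 1 i hi]
  split_ifs <;> first | rfl | (exfalso; omega) | simp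

lemma nbr_f10 {n : ℕ} (hn : 1 < n) : nbr n (f1V n) 0 = e1V n := by
  rw [eq_iff_bits]
  intro i hi
  rw [bit_e1 hn, bit_nbr_of (f1V n) _ (bit_f1 hn) 0 i hi]
  split_ifs <;> first | rfl | (exfalso; omega) | simp

lemma nbr_f11 {n : ℕ} (hn : 1 < n) : nbr n (f1V n) 1 = wV n := by
  rw [eq_iff_bits]
  intro i hi
  rw [bit_w (by omega), bit_nbr_of (f1V n) _ (bit_f1 hn) 1 i hi]
  split_ifs <;> first | rfl | (exfalso; omega) | simp

/-- distinguishing vertices via one bit -/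
lemma ne_of_bit {n i : ℕ} {x y : CQVertex n} (h : CQbit n x i ≠ CQbit n y i) : x ≠ y := by
  intro he; exact h (by rw [he])

end CQAux
namespace CQAux
open SimpleGraph

section Star

variable {V : Type*} {G : SimpleGraph V} {t : ℕ}

/-- a star-shaped subgraph -/
def starSub (G : SimpleGraph V) (φ : Fin (t + 1) → V)
    (hadj : ∀ i : Fin (t + 1), i ≠ 0 → G.Adj (φ 0) (φ i)) : G.Subgraph where
  verts := Set.range φ
  Adj x y := ∃ i : Fin (t + 1), i ≠ 0 ∧ ((x = φ 0 ∧ y = φ i) ∨ (x = φ i ∧ y = φ 0))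
  adj_sub := by
    rintro x y ⟨i, hi, (⟨rfl, rfl⟩ | ⟨rfl, rfl⟩)⟩
    · exact hadj i hi
    · exact (hadj i hi).symm
  edge_vert := by
    rintro x y ⟨i, hi, (⟨rfl, rfl⟩ | ⟨rfl, rfl⟩)⟩
    · exact ⟨0, rfl⟩
    · exact ⟨i, rfl⟩
  symm := by
    constructor
    rintro x y ⟨i, hi, (⟨rfl, rfl⟩ | ⟨rfl, rfl⟩)⟩ <;> exact ⟨i, hi, by tauto⟩

lemma starSub_verts (φ : Fin (t + 1) → V) (hadj) :
    (starSub G φ hadj).verts = Set.range φ := rfl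

lemma starSub_iso (φ : Fin (t + 1) → V) (hadj) (hinj : Function.Injective φ) :
    Nonempty ((starSub G φ hadj).coe ≃g _root_.starGraph t) := by
  refine ⟨⟨(Equiv.ofInjective φ hinj).symm, ?_⟩⟩
  intro a b
  have ha : (a : V) = φ ((Equiv.ofInjective φ hinj).symm a) :=
    (congrArg Subtype.val ((Equiv.ofInjective φ hinj).apply_symm_apply a)).symm
  have hb : (b : V) = φ ((Equiv.ofInjective φ hinj).symm b) :=
    (congrArg Subtype.val ((Equiv.ofInjective φ hinj).apply_symm_apply b)).symm
  rw [_root_.starGraph, SimpleGraph.fromRel_adj]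
  constructor
  · rintro ⟨hne, h0 | h0⟩
    · have h0' : (Equiv.ofInjective φ hinj).symm a = 0 := h0
      have hne' : (Equiv.ofInjective φ hinj).symm a ≠ (Equiv.ofInjective φ hinj).symm b := hne
      show (starSub G φ hadj).Adj (a : V) (b : V)
      rw [ha, hb, h0']
      exact ⟨(Equiv.ofInjective φ hinj).symm b,
        fun hh => hne' (h0'.trans hh.symm), Or.inl ⟨rfl, rfl⟩⟩
    · have h0' : (Equiv.ofInjective φ hinj).symm b = 0 := h0
      have hne' : (Equiv.ofInjective φ hinj).symm a ≠ (Equiv.ofInjective φ hinj).symm b := hne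
      show (starSub G φ hadj).Adj (a : V) (b : V)
      rw [ha, hb, h0']
      exact ⟨(Equiv.ofInjective φ hinj).symm a,
        fun hh => hne' (hh.trans h0'.symm), Or.inr ⟨rfl, rfl⟩⟩
  · rintro h
    have h' : (starSub G φ hadj).Adj (a : V) (b : V) := h
    rw [ha, hb] at h'
    obtain ⟨m, hm, (⟨h1, h2⟩ | ⟨h1, h2⟩)⟩ := h'
    · refine ⟨fun hh => hm ?_, Or.inl (hinj h1)⟩
      have hh' : (Equiv.ofInjective φ hinj).symm a = (Equiv.ofInjective φ hinj).symm b := hh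
      rw [← hinj h2, ← hh', hinj h1]
    · refine ⟨fun hh => hm ?_, Or.inr (hinj h2)⟩
      have hh' : (Equiv.ofInjective φ hinj).symm a = (Equiv.ofInjective φ hinj).symm b := hh
      rw [← hinj h1, hh', hinj h2]

lemma no_walk {a b : V} (h : ∀ y, ¬ G.Adj a y) (p : G.Walk a b) : a = b := by
  cases p with
  | nil => rfl
  | cons h' _ => exact absurd h' (h _)

lemma isSubgraphCut_of_isolated (F : Finset G.Subgraph) (e : V)
    (he : e ∉ SimpleGraph.cutVerts F)
    (hnb : ∀ y, G.Adj e y → y ∈ SimpleGraph.cutVerts F) : G.IsSubgraphCut F := by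
  by_cases hs : ((SimpleGraph.cutVerts F)ᶜ : Set V).Subsingleton
  · exact Or.inr hs
  · left
    intro hcon
    rw [Set.not_subsingleton_iff] at hs
    obtain ⟨x, hx, y, hy, hxy⟩ := hs
    obtain ⟨x, hx, hxe⟩ : ∃ x, x ∈ (SimpleGraph.cutVerts F)ᶜ ∧ x ≠ e := by
      rcases eq_or_ne x e with rfl | h
      · exact ⟨y, hy, fun hh => hxy hh.symm⟩
      · exact ⟨x, hx, h⟩
    obtain ⟨p⟩ := hcon.preconnected ⟨e, he⟩ ⟨x, hx⟩
    have hiso : ∀ u, ¬ (G.induce ((SimpleGraph.cutVerts F)ᶜ : Set V)).Adj ⟨e, he⟩ u := by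
      rintro ⟨u, hu⟩ hadj
      have : G.Adj e u := hadj
      exact hu (hnb u this)
    have := no_walk hiso p
    exact hxe (congrArg Subtype.val this).symm

lemma mem_cutVerts {F : Finset G.Subgraph} {x : V} :
    x ∈ SimpleGraph.cutVerts F ↔ ∃ A ∈ F, x ∈ A.verts := by
  simp [SimpleGraph.cutVerts]

end Star

section Edges

variable {n : ℕ}

/-- the edge from `x` to its neighbour across dimension `k` -/
def edV (hn : 0 < n) (x : CQVertex n) (k : ℕ) : (crossedCube n).edgeSet :=
  ⟨s(x, nbr n x (k % n)),
    (crossedCube n).mem_edgeSet.2 ((adj_iff_nbr x _).2 ⟨k % n, Nat.mod_lt _ hn, rfl⟩)⟩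

lemma edV_val (hn : 0 < n) (x : CQVertex n) {k : ℕ} (hk : k < n) :
    (edV hn x k : Sym2 (CQVertex n)) = s(x, nbr n x k) := by
  have h : k % n = k := Nat.mod_eq_of_lt hk
  simp only [edV, h]

lemma edV_inj (hn : 0 < n) (x : CQVertex n) {k k' : ℕ} (hk : k < n) (hk' : k' < n)
    (h : edV hn x k = edV hn x k') : k = k' := by
  have hv : s(x, nbr n x k) = s(x, nbr n x k') := by
    rw [← edV_val hn x hk, ← edV_val hn x hk', h]
  rw [Sym2.eq_iff] at hv
  rcases hv with ⟨-, h2⟩ | ⟨h1, h2⟩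
  · exact nbr_injective x hk hk' h2
  · exact absurd h1.symm (nbr_ne x hk')

/-- every linegraph-neighbour of the edge `{z, w}` is `{z, eₖ}` or `{w, gₖ}`, `1 ≤ k < n` -/
lemma nbhd_e (hn : 0 < n) (y : (crossedCube n).edgeSet)
    (hadj : (BCDC n).Adj (edV hn (zV n) 0) y) :
    ∃ k, 1 ≤ k ∧ k < n ∧ (y = edV hn (zV n) k ∨ y = edV hn (wV n) k) := by
  rw [BCDC, SimpleGraph.lineGraph_adj_iff_exists] at hadj
  obtain ⟨hne, v, hv1, hv2⟩ := hadj
  rw [edV_val hn (zV n) hn] at hv1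
  have hyedge : (y : Sym2 (CQVertex n)) ∈ (crossedCube n).edgeSet := y.2
  rw [Sym2.mem_iff] at hv1
  rcases hv1 with rfl | rfl
  · -- v = z
    obtain ⟨b, hb⟩ := Sym2.mem_iff_exists.1 hv2
    rw [hb] at hyedge
    rw [SimpleGraph.mem_edgeSet, adj_iff_nbr] at hyedge
    obtain ⟨k, hk, rfl⟩ := hyedge
    have hy : y = edV hn (zV n) k := Subtype.ext (by rw [edV_val hn _ hk, hb])
    refine ⟨k, ?_, hk, Or.inl hy⟩
    rcases Nat.eq_zero_or_pos k with rfl | h1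
    · exact absurd hy.symm hne
    · exact h1
  · -- v = nbr z 0 = w
    obtain ⟨b, hb⟩ := Sym2.mem_iff_exists.1 hv2
    rw [hb] at hyedge
    rw [SimpleGraph.mem_edgeSet, adj_iff_nbr] at hyedge
    obtain ⟨k, hk, rfl⟩ := hyedge
    have hy : y = edV hn (wV n) k := Subtype.ext (by rw [edV_val hn _ hk, hb]; rfl)
    refine ⟨k, ?_, hk, Or.inr hy⟩
    rcases Nat.eq_zero_or_pos k with rfl | h1
    · exfalso
      apply hne
      apply Subtype.ext
      rw [edV_val hn _ hn, hb]
      show s(zV n, wV n) = s(wV n, nbr n (wV n) 0)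
      rw [nbr_w0 hn, Sym2.eq_iff]
      exact Or.inr ⟨rfl, rfl⟩
    · exact h1

end Edges
end CQAux
namespace CQAux
open SimpleGraph

variable {n : ℕ}

lemma edV_ne (hn : 0 < n) (x : CQVertex n) {a b : ℕ} (ha : a < n) (hb : b < n)
    (hab : a ≠ b) : edV hn x a ≠ edV hn x b :=
  fun h => hab (edV_inj hn x ha hb h)

lemma line_adj_same (hn : 0 < n) (x : CQVertex n) {a b : ℕ} (ha : a < n) (hb : b < n)
    (hab : a ≠ b) : (BCDC n).Adj (edV hn x a) (edV hn x b) := by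
  rw [BCDC, SimpleGraph.lineGraph_adj_iff_exists]
  refine ⟨edV_ne hn x ha hb hab, x, ?_, ?_⟩ <;>
    rw [edV_val hn x (by omega)] <;> exact Sym2.mem_iff.2 (Or.inl rfl)

lemma structConn_le_of (hn : 0 < n) (t c : ℕ) (F : Finset (BCDC n).Subgraph)
    (hiso : ∀ A ∈ F, Nonempty (A.coe ≃g _root_.starGraph t))
    (hcov : ∀ k, 1 ≤ k → k < n →
      edV hn (zV n) k ∈ SimpleGraph.cutVerts F ∧ edV hn (wV n) k ∈ SimpleGraph.cutVerts F)
    (he : edV hn (zV n) 0 ∉ SimpleGraph.cutVerts F)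
    (hcard : F.card ≤ c) :
    (BCDC n).structConn (_root_.starGraph t) ≤ c := by
  refine le_trans (Nat.sInf_le ⟨F, ⟨?_, hiso⟩, rfl⟩) hcard
  apply isSubgraphCut_of_isolated F (edV hn (zV n) 0) he
  intro y hy
  obtain ⟨k, h1, h2, (rfl | rfl)⟩ := nbhd_e hn y hy
  · exact (hcov k h1 h2).1
  · exact (hcov k h1 h2).2

/-- Case t ≤ n - 2 : two fans of ⌈(n-1)/(1+t)⌉ stars -/
lemma caseA (t : ℕ) (hn : 4 ≤ n) (ht1 : 2 ≤ t) (ht2 : t ≤ n - 2) :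
    (BCDC n).structConn (_root_.starGraph t) ≤ 2 * ((n - 1 + t) / (1 + t)) := by
  classical
  have hn0 : 0 < n := by omega
  set m := (n - 1 + t) / (1 + t) with hm
  -- star start indices
  set s : ℕ → ℕ := fun j => min (j * (t + 1) + 1) (n - 1 - t) with hs
  have hsub : ∀ (j : ℕ) (i : Fin (t + 1)), s j + (i : ℕ) < n := by
    intro j i
    have : s j ≤ n - 1 - t := min_le_right _ _
    have : (i : ℕ) ≤ t := by omega
    omega
  have hs1 : ∀ j : ℕ, 1 ≤ s j := by
    intro j
    have h1 : 1 ≤ j * (t + 1) + 1 := by omega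
    have h2 : 1 ≤ n - 1 - t := by omega
    exact le_min h1 h2
  have hadjv : ∀ (x : CQVertex n) (j : ℕ) (i : Fin (t + 1)), i ≠ 0 →
      (BCDC n).Adj (edV hn0 x (s j + (0 : Fin (t+1)))) (edV hn0 x (s j + (i : ℕ))) := by
    intro x j i hi
    apply line_adj_same hn0 x (by simpa using hsub j 0) (hsub j i)
    have : (i : ℕ) ≠ 0 := fun h => hi (Fin.ext h)
    simp
    omega
  have hinj : ∀ (x : CQVertex n) (j : ℕ),
      Function.Injective (fun i : Fin (t + 1) => edV hn0 x (s j + (i : ℕ))) := by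
    intro x j i i' h
    have := edV_inj hn0 x (hsub j i) (hsub j i') h
    exact Fin.ext (by omega)
  -- the stars
  set Av : ℕ → (BCDC n).Subgraph := fun j =>
    starSub (BCDC n) (fun i : Fin (t + 1) => edV hn0 (zV n) (s j + (i : ℕ)))
      (fun i hi => hadjv (zV n) j i hi) with hAv
  set Aw : ℕ → (BCDC n).Subgraph := fun j =>
    starSub (BCDC n) (fun i : Fin (t + 1) => edV hn0 (wV n) (s j + (i : ℕ)))
      (fun i hi => hadjv (wV n) j i hi) with hAw
  set F : Finset (BCDC n).Subgraph :=
    ((Finset.range m).image Av) ∪ ((Finset.range m).image Aw) with hF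
  -- index location
  have hloc : ∀ k, 1 ≤ k → k < n → ∃ j < m, ∃ i : Fin (t + 1), s j + (i : ℕ) = k := by
    intro k hk1 hkn
    refine ⟨(k - 1) / (1 + t), ?_, ?_⟩
    · have h1 := Nat.div_add_mod (k - 1) (1 + t)
      have h2 := Nat.mod_lt (k - 1) (show 0 < 1 + t by omega)
      have h3 := Nat.div_add_mod (n - 1 + t) (1 + t)
      have h4 := Nat.mod_lt (n - 1 + t) (show 0 < 1 + t by omega)
      rw [← hm] at h3
      have hlt : (1 + t) * ((k - 1) / (1 + t)) < (1 + t) * m := by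
        generalize (1 + t) * ((k - 1) / (1 + t)) = P at h1 ⊢
        generalize (1 + t) * m = Q at h3 ⊢
        omega
      exact Nat.lt_of_mul_lt_mul_left hlt
    · set j := (k - 1) / (1 + t) with hj
      have h1 := Nat.div_add_mod (k - 1) (1 + t)
      rw [← hj] at h1
      have h2 := Nat.mod_lt (k - 1) (show 0 < 1 + t by omega)
      have h1' : j * (t + 1) + (k - 1) % (1 + t) = k - 1 := by
        rw [show j * (t + 1) = (1 + t) * j from by ring]; exact h1
      have hsj : s j = min (j * (t + 1) + 1) (n - 1 - t) := rfl
      have hji : s j ≤ k ∧ k ≤ s j + t := by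
        rcases min_cases (j * (t + 1) + 1) (n - 1 - t) with ⟨hc, hd⟩ | ⟨hc, hd⟩ <;>
          rw [hc] at hsj <;>
          · generalize hq : j * (t + 1) = P at h1' hsj hd
            omega
      exact ⟨⟨k - s j, by omega⟩, show s j + (k - s j) = k by omega⟩
  refine structConn_le_of hn0 t _ F ?_ ?_ ?_ ?_
  · -- iso
    intro A hA
    rw [hF, Finset.mem_union, Finset.mem_image, Finset.mem_image] at hA
    rcases hA with ⟨j, _, rfl⟩ | ⟨j, _, rfl⟩
    · exact starSub_iso _ _ (hinj (zV n) j)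
    · exact starSub_iso _ _ (hinj (wV n) j)
  · -- coverage
    intro k hk1 hkn
    obtain ⟨j, hjm, i, hji⟩ := hloc k hk1 hkn
    constructor
    · refine mem_cutVerts.2 ⟨Av j, ?_, ?_⟩
      · rw [hF, Finset.mem_union]
        exact Or.inl (Finset.mem_image.2 ⟨j, Finset.mem_range.2 hjm, rfl⟩)
      · exact ⟨i, show edV hn0 (zV n) (s j + (i : ℕ)) = _ from by rw [hji]⟩
    · refine mem_cutVerts.2 ⟨Aw j, ?_, ?_⟩
      · rw [hF, Finset.mem_union]
        exact Or.inr (Finset.mem_image.2 ⟨j, Finset.mem_range.2 hjm, rfl⟩)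
      · exact ⟨i, show edV hn0 (wV n) (s j + (i : ℕ)) = _ from by rw [hji]⟩
  · -- e not covered
    intro hmem
    obtain ⟨A, hA, hvA⟩ := mem_cutVerts.1 hmem
    rw [hF, Finset.mem_union, Finset.mem_image, Finset.mem_image] at hA
    rcases hA with ⟨j, _, rfl⟩ | ⟨j, _, rfl⟩
    · obtain ⟨i, hi⟩ := hvA
      have hi' : edV hn0 (zV n) (s j + (i : ℕ)) = edV hn0 (zV n) 0 := hi
      have := edV_inj hn0 (zV n) (hsub j i) hn0 hi'
      have := hs1 j
      omega
    · obtain ⟨i, hi⟩ := hvA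
      have hi' : edV hn0 (wV n) (s j + (i : ℕ)) = edV hn0 (zV n) 0 := hi
      -- edV w (s j + i) = edV z 0 : compare via Sym2
      have hv : s(wV n, nbr n (wV n) (s j + (i : ℕ))) = s(zV n, nbr n (zV n) 0) := by
        rw [← edV_val hn0 _ (hsub j i), ← edV_val hn0 _ hn0]
        exact congrArg Subtype.val hi'
      rw [Sym2.eq_iff] at hv
      have hwz : wV n ≠ zV n := ne_of_bit (i := 0)
        (by rw [bit_w hn0, bit_z]; simp)
      rcases hv with ⟨h1, -⟩ | ⟨-, h2⟩
      · exact hwz h1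
      · -- nbr w (s j + i) = z with s j + i ≥ 1 : impossible
        have hk : 1 ≤ s j + (i : ℕ) := by have := hs1 j; omega
        have hb : CQbit n (nbr n (wV n) (s j + (i : ℕ))) (s j + (i : ℕ)) = true := by
          rw [bit_nbr_self _ (hsub j i), bit_w hn0, if_neg (by omega)]
          rfl
        rw [h2, bit_z] at hb
        exact Bool.noConfusion hb
  · -- cardinality
    calc F.card ≤ ((Finset.range m).image Av).card + ((Finset.range m).image Aw).card :=
          Finset.card_union_le _ _
    _ ≤ m + m := Nat.add_le_add (Finset.card_image_le.trans (by simp))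
          (Finset.card_image_le.trans (by simp))
    _ = 2 * m := by ring

end CQAux
namespace CQAux
open SimpleGraph

variable {n : ℕ}

lemma edV_ne2 (hn : 0 < n) {x y : CQVertex n} {a b : ℕ} (ha : a < n) (hb : b < n)
    (h1 : x ≠ y) (h2 : x ≠ nbr n y b) : edV hn x a ≠ edV hn y b := by
  intro h
  have hv := congrArg Subtype.val h
  rw [edV_val hn x ha, edV_val hn y hb, Sym2.eq_iff] at hv
  rcases hv with ⟨hc, -⟩ | ⟨hc, -⟩
  · exact h1 hc
  · exact h2 hc

lemma edV_ne2' (hn : 0 < n) {x y : CQVertex n} {a b : ℕ} (ha : a < n) (hb : b < n)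
    (h1 : x ≠ y) (h2 : nbr n x a ≠ y) : edV hn x a ≠ edV hn y b := by
  intro h
  have hv := congrArg Subtype.val h
  rw [edV_val hn x ha, edV_val hn y hb, Sym2.eq_iff] at hv
  rcases hv with ⟨hc, -⟩ | ⟨-, hc⟩
  · exact h1 hc
  · exact h2 hc

lemma line_adj_touch (hn : 0 < n) (x : CQVertex n) {k d : ℕ} (hk : k < n) (hd : d < n)
    (hne : nbr n (nbr n x k) d ≠ x) :
    (BCDC n).Adj (edV hn x k) (edV hn (nbr n x k) d) := by
  rw [BCDC, SimpleGraph.lineGraph_adj_iff_exists]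
  refine ⟨edV_ne2 hn hk hd (nbr_ne x hk).symm hne.symm, nbr n x k,
    ?_, ?_⟩
  · rw [edV_val hn x hk]; exact Sym2.mem_iff.2 (Or.inr rfl)
  · rw [edV_val hn _ hd]; exact Sym2.mem_iff.2 (Or.inl rfl)

section NE
variable (hn4 : 4 ≤ n)
include hn4

lemma z_ne_w : zV n ≠ wV n :=
  ne_of_bit (i := 0) (by rw [bit_z, bit_w (by omega), if_pos rfl]; simp)

lemma z_ne_e1 : zV n ≠ e1V n :=
  ne_of_bit (i := 1) (by rw [bit_z, bit_e1 (by omega), if_pos rfl]; simp)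

lemma z_ne_f1 : zV n ≠ f1V n :=
  ne_of_bit (i := 0) (by rw [bit_z, bit_f1 (by omega), if_pos (by omega)]; simp)

lemma w_ne_e1 : wV n ≠ e1V n :=
  ne_of_bit (i := 0) (by rw [bit_w (by omega), bit_e1 (by omega), if_pos rfl, if_neg (by omega)]; simp)

lemma w_ne_f1 : wV n ≠ f1V n :=
  ne_of_bit (i := 1) (by rw [bit_w (by omega), bit_f1 (by omega), if_neg (by omega), if_pos (by omega)]; simp)

lemma e1_ne_f1 : e1V n ≠ f1V n :=
  ne_of_bit (i := 0) (by rw [bit_e1 (by omega), bit_f1 (by omega), if_neg (by omega), if_pos (by omega)]; simp)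

lemma nbr_e1_ne_z {d : ℕ} (hd : d < n) (hd1 : d ≠ 1) : nbr n (e1V n) d ≠ zV n := by
  rcases Nat.eq_zero_or_pos d with rfl | hd0
  · show f1V n ≠ zV n
    exact (z_ne_f1 hn4).symm
  · have hd2 : 2 ≤ d := by omega
    exact ne_of_bit (i := d)
      (by rw [bit_e1k hd2 hd, bit_z, if_pos (Or.inr rfl)]; simp)

lemma nbr_f1_ne_z {d : ℕ} (hd : d < n) : nbr n (f1V n) d ≠ zV n := by
  rcases Nat.eq_zero_or_pos d with rfl | hd0
  · show nbr n (f1V n) 0 ≠ zV n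
    rw [nbr_f10 (by omega)]
    exact (z_ne_e1 hn4).symm
  rcases eq_or_ne d 1 with rfl | hd1
  · rw [nbr_f11 (by omega)]
    exact (z_ne_w hn4).symm
  · have hd2 : 2 ≤ d := by omega
    exact ne_of_bit (i := 0)
      (by rw [bit_f1k hd2 hd, bit_z, if_pos (Or.inl rfl)]; simp)

lemma nbr_e1_ne_w {d : ℕ} (hd : d < n) : nbr n (e1V n) d ≠ wV n := by
  rcases Nat.eq_zero_or_pos d with rfl | hd0
  · show f1V n ≠ wV n
    exact (w_ne_f1 hn4).symm
  rcases eq_or_ne d 1 with rfl | hd1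
  · rw [nbr_e11 (by omega)]
    exact z_ne_w hn4
  · have hd2 : 2 ≤ d := by omega
    exact ne_of_bit (i := 0)
      (by rw [bit_e1k hd2 hd, bit_w (by omega), if_neg (by omega), if_pos rfl]; simp)

lemma nbr_f1_ne_w {d : ℕ} (hd : d < n) (hd1 : d ≠ 1) : nbr n (f1V n) d ≠ wV n := by
  rcases Nat.eq_zero_or_pos d with rfl | hd0
  · rw [nbr_f10 (by omega)]
    exact (w_ne_e1 hn4).symm
  · have hd2 : 2 ≤ d := by omega
    exact ne_of_bit (i := d)
      (by rw [bit_f1k hd2 hd, bit_w (by omega), if_pos (Or.inr rfl), if_neg (by omega)]; simp)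

lemma nbr_e1_ne_f1 {d : ℕ} (hd : d < n) (hd0 : d ≠ 0) : nbr n (e1V n) d ≠ f1V n := by
  rcases eq_or_ne d 1 with rfl | hd1
  · rw [nbr_e11 (by omega)]
    exact z_ne_f1 hn4
  · have hd2 : 2 ≤ d := by omega
    exact ne_of_bit (i := 0)
      (by rw [bit_e1k hd2 hd, bit_f1 (by omega), if_neg (by omega), if_pos (by omega)]; simp)

lemma nbr_w_ne_z {k : ℕ} (hk : k < n) (hk0 : k ≠ 0) : nbr n (wV n) k ≠ zV n := by
  rcases eq_or_ne k 1 with rfl | hk1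
  · rw [nbr_w1 (by omega)]
    exact (z_ne_f1 hn4).symm
  · have hk2 : 2 ≤ k := by omega
    exact ne_of_bit (i := 0)
      (by rw [bit_wk hk2 hk, bit_z, if_pos (Or.inl rfl)]; simp)

lemma nbr_z_ne_w {k : ℕ} (hk : k < n) (hk0 : k ≠ 0) : nbr n (zV n) k ≠ wV n := by
  apply ne_of_bit (i := 0)
  rw [bit_zk hk, bit_w (by omega), if_neg (by omega), if_pos rfl]
  simp

lemma nbr_z_ne_f1 {k : ℕ} (hk : k < n) : nbr n (zV n) k ≠ f1V n := by
  rcases Nat.eq_zero_or_pos k with rfl | hk0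
  · show wV n ≠ f1V n
    exact w_ne_f1 hn4
  · apply ne_of_bit (i := 0)
    rw [bit_zk hk, bit_f1 (by omega), if_neg (by omega), if_pos (by omega)]
    simp

lemma nbr_w_ne_e1 {k : ℕ} (hk : k < n) (hk0 : k ≠ 0) : nbr n (wV n) k ≠ e1V n := by
  rcases eq_or_ne k 1 with rfl | hk1
  · rw [nbr_w1 (by omega)]
    exact (e1_ne_f1 hn4).symm
  · have hk2 : 2 ≤ k := by omega
    exact ne_of_bit (i := 0)
      (by rw [bit_wk hk2 hk, bit_e1 (by omega), if_pos (Or.inl rfl), if_neg (by omega)]; simp)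

end NE
end CQAux
namespace CQAux
open SimpleGraph

variable {n : ℕ}

/-- Case t ≥ n - 1 : two big stars suffice -/
lemma caseB (t : ℕ) (hn : 4 ≤ n) (ht1 : n - 1 ≤ t) (ht2 : t ≤ 2 * n - 3) :
    (BCDC n).structConn (_root_.starGraph t) ≤ 2 := by
  classical
  have hn0 : 0 < n := by omega
  -- dimension map for the extra leaves
  set dd : ℕ → ℕ := fun i => if i = n - 1 then 0 else i - (n - 2) with hdd
  have hdd_lt : ∀ i : ℕ, i ≤ t → dd i < n := by
    intro i hi
    show (if i = n - 1 then 0 else i - (n - 2)) < n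
    split_ifs <;> omega
  have hdd_ne1 : ∀ i : ℕ, n - 1 ≤ i → dd i ≠ 1 := by
    intro i hi
    show (if i = n - 1 then 0 else i - (n - 2)) ≠ 1
    split_ifs <;> omega
  have hdd_inj : ∀ i i' : ℕ, n - 1 ≤ i → n - 1 ≤ i' → i ≤ t → i' ≤ t →
      dd i = dd i' → i = i' := by
    intro i i' h1 h2 h3 h4 h
    have h' : (if i = n - 1 then 0 else i - (n - 2)) =
        (if i' = n - 1 then 0 else i' - (n - 2)) := h
    split_ifs at h' <;> omega
  -- the v-side star
  set φv : Fin (t + 1) → (crossedCube n).edgeSet := fun i =>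
    if (i : ℕ) ≤ n - 2 then edV hn0 (zV n) ((i : ℕ) + 1)
    else edV hn0 (e1V n) (dd (i : ℕ)) with hφv
  have hφv0 : φv 0 = edV hn0 (zV n) 1 := by
    rw [hφv]; simp only; rw [if_pos (show ((0 : Fin (t+1)) : ℕ) ≤ n - 2 by simp)]; simp
  have hadjv : ∀ i : Fin (t + 1), i ≠ 0 → (BCDC n).Adj (φv 0) (φv i) := by
    intro i hi
    have hi' : (i : ℕ) ≠ 0 := fun h => hi (Fin.ext h)
    have hit : (i : ℕ) ≤ t := by omega
    rw [hφv0, hφv]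
    simp only
    split_ifs with h
    · exact line_adj_same hn0 (zV n) (by omega) (by omega) (by omega)
    · have h9 : n - 1 ≤ (i : ℕ) := by omega
      exact line_adj_touch hn0 (zV n) (by omega) (hdd_lt _ hit)
        (nbr_e1_ne_z hn (hdd_lt _ hit) (hdd_ne1 _ h9))
  have hinjv : Function.Injective φv := by
    intro i i' h
    rw [hφv] at h
    simp only at h
    have hit : (i : ℕ) ≤ t := by omega
    have hit' : (i' : ℕ) ≤ t := by omega
    split_ifs at h with h1 h2 h2
    · exact Fin.ext (by have := edV_inj hn0 _ (by omega) (by omega) h; omega)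
    · exact absurd h (edV_ne2 hn0 (by omega) (hdd_lt _ hit')
        (z_ne_e1 hn) (nbr_e1_ne_z hn (hdd_lt _ hit') (hdd_ne1 _ (by omega))).symm)
    · exact absurd h.symm (edV_ne2 hn0 (by omega) (hdd_lt _ hit)
        (z_ne_e1 hn) (nbr_e1_ne_z hn (hdd_lt _ hit) (hdd_ne1 _ (by omega))).symm)
    · exact Fin.ext (hdd_inj _ _ (by omega) (by omega) hit hit'
        (edV_inj hn0 _ (hdd_lt _ hit) (hdd_lt _ hit') h))
  -- the w-side star
  set φw : Fin (t + 1) → (crossedCube n).edgeSet := fun i =>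
    if (i : ℕ) ≤ n - 2 then edV hn0 (wV n) ((i : ℕ) + 1)
    else edV hn0 (f1V n) (dd (i : ℕ)) with hφw
  have hφw0 : φw 0 = edV hn0 (wV n) 1 := by
    rw [hφw]; simp only; rw [if_pos (show ((0 : Fin (t+1)) : ℕ) ≤ n - 2 by simp)]; simp
  have hedf : ∀ d : ℕ, d < n → edV hn0 (nbr n (wV n) 1) d = edV hn0 (f1V n) d := by
    intro d hd
    rw [nbr_w1 (by omega)]
  have hadjw : ∀ i : Fin (t + 1), i ≠ 0 → (BCDC n).Adj (φw 0) (φw i) := by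
    intro i hi
    have hi' : (i : ℕ) ≠ 0 := fun h => hi (Fin.ext h)
    have hit : (i : ℕ) ≤ t := by omega
    rw [hφw0, hφw]
    simp only
    split_ifs with h
    · exact line_adj_same hn0 (wV n) (by omega) (by omega) (by omega)
    · have h9 : n - 1 ≤ (i : ℕ) := by omega
      rw [← hedf _ (hdd_lt _ hit)]
      apply line_adj_touch hn0 (wV n) (by omega) (hdd_lt _ hit)
      rw [nbr_w1 (by omega)]
      exact nbr_f1_ne_w hn (hdd_lt _ hit) (hdd_ne1 _ h9)
  have hinjw : Function.Injective φw := by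
    intro i i' h
    rw [hφw] at h
    simp only at h
    have hit : (i : ℕ) ≤ t := by omega
    have hit' : (i' : ℕ) ≤ t := by omega
    split_ifs at h with h1 h2 h2
    · exact Fin.ext (by have := edV_inj hn0 _ (by omega) (by omega) h; omega)
    · exact absurd h (edV_ne2 hn0 (by omega) (hdd_lt _ hit')
        (w_ne_f1 hn) (nbr_f1_ne_w hn (hdd_lt _ hit') (hdd_ne1 _ (by omega))).symm)
    · exact absurd h.symm (edV_ne2 hn0 (by omega) (hdd_lt _ hit)
        (w_ne_f1 hn) (nbr_f1_ne_w hn (hdd_lt _ hit) (hdd_ne1 _ (by omega))).symm)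
    · exact Fin.ext (hdd_inj _ _ (by omega) (by omega) hit hit'
        (edV_inj hn0 _ (hdd_lt _ hit) (hdd_lt _ hit') h))
  set Sv : (BCDC n).Subgraph := starSub (BCDC n) φv hadjv with hSv
  set Sw : (BCDC n).Subgraph := starSub (BCDC n) φw hadjw with hSw
  set F : Finset (BCDC n).Subgraph := {Sv, Sw} with hF
  refine structConn_le_of hn0 t _ F ?_ ?_ ?_ ?_
  · intro A hA
    rw [hF, Finset.mem_insert, Finset.mem_singleton] at hA
    rcases hA with rfl | rfl
    · exact starSub_iso _ _ hinjv
    · exact starSub_iso _ _ hinjw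
  · intro k hk1 hkn
    have hmem : ∀ S ∈ F, ∀ x, x ∈ S.verts → x ∈ SimpleGraph.cutVerts F :=
      fun S hS x hx => mem_cutVerts.2 ⟨S, hS, hx⟩
    have hSvF : Sv ∈ F := by rw [hF]; exact Finset.mem_insert_self _ _
    have hSwF : Sw ∈ F := by
      rw [hF]; exact Finset.mem_insert_of_mem (Finset.mem_singleton_self _)
    constructor
    · refine hmem Sv hSvF _ ⟨⟨k - 1, by omega⟩, ?_⟩
      show φv _ = _
      rw [hφv]
      simp only
      rw [if_pos (show ((⟨k - 1, by omega⟩ : Fin (t + 1)) : ℕ) ≤ n - 2 from by simp; omega)]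
      congr 1
      show k - 1 + 1 = k
      omega
    · refine hmem Sw hSwF _ ⟨⟨k - 1, by omega⟩, ?_⟩
      show φw _ = _
      rw [hφw]
      simp only
      rw [if_pos (show ((⟨k - 1, by omega⟩ : Fin (t + 1)) : ℕ) ≤ n - 2 from by simp; omega)]
      congr 1
      show k - 1 + 1 = k
      omega
  · intro hmem
    obtain ⟨A, hA, hvA⟩ := mem_cutVerts.1 hmem
    rw [hF, Finset.mem_insert, Finset.mem_singleton] at hA
    rcases hA with rfl | rfl
    · obtain ⟨i, hi⟩ := hvA
      have hi' : φv i = edV hn0 (zV n) 0 := hi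
      rw [hφv] at hi'
      simp only at hi'
      have hit : (i : ℕ) ≤ t := by omega
      split_ifs at hi' with h1
      · have := edV_inj hn0 _ (by omega) hn0 hi'
        omega
      · exact absurd hi' (edV_ne2 hn0 (hdd_lt _ hit) hn0
          (z_ne_e1 hn).symm (fun hh => (w_ne_e1 hn).symm (show e1V n = wV n from hh)))
    · obtain ⟨i, hi⟩ := hvA
      have hi' : φw i = edV hn0 (zV n) 0 := hi
      rw [hφw] at hi'
      simp only at hi'
      have hit : (i : ℕ) ≤ t := by omega
      split_ifs at hi' with h1
      · exact absurd hi' (edV_ne2' hn0 (by omega) hn0 (z_ne_w hn).symm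
          (nbr_w_ne_z hn (by omega) (by omega)))
      · exact absurd hi' (edV_ne2 hn0 (hdd_lt _ hit) hn0
          (z_ne_f1 hn).symm (fun hh => (w_ne_f1 hn).symm (show f1V n = wV n from hh)))
  · rw [hF]
    exact (Finset.card_insert_le _ _).trans (by simp)

end CQAux
namespace CQAux
open SimpleGraph

variable {n : ℕ}

/-- Case t ≤ n - 3 and (1+t) ∣ (n-2) : 2q + 1 stars suffice -/
lemma caseC (t q : ℕ) (hn : 4 ≤ n) (ht1 : 2 ≤ t) (ht3 : t ≤ n - 3)
    (hq : n - 2 = (1 + t) * q) :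
    (BCDC n).structConn (_root_.starGraph t) ≤ 2 * q + 1 := by
  classical
  have hn0 : 0 < n := by omega
  set s : ℕ → ℕ := fun j => min (j * (t + 1) + 2) (n - 1 - t) with hs
  have hsub : ∀ (j : ℕ) (i : Fin (t + 1)), s j + (i : ℕ) < n := by
    intro j i
    have h1 : s j ≤ n - 1 - t := min_le_right _ _
    have h2 : (i : ℕ) ≤ t := by omega
    omega
  have hs1 : ∀ j : ℕ, 2 ≤ s j := by
    intro j
    exact le_min (by omega) (by omega)
  have hadjs : ∀ (x : CQVertex n) (j : ℕ) (i : Fin (t + 1)), i ≠ 0 →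
      (BCDC n).Adj (edV hn0 x (s j + (0 : Fin (t+1)))) (edV hn0 x (s j + (i : ℕ))) := by
    intro x j i hi
    apply line_adj_same hn0 x (by simpa using hsub j 0) (hsub j i)
    have : (i : ℕ) ≠ 0 := fun h => hi (Fin.ext h)
    simp
    omega
  have hinj : ∀ (x : CQVertex n) (j : ℕ),
      Function.Injective (fun i : Fin (t + 1) => edV hn0 x (s j + (i : ℕ))) := by
    intro x j i i' h
    have := edV_inj hn0 x (hsub j i) (hsub j i') h
    exact Fin.ext (by omega)
  set Av : ℕ → (BCDC n).Subgraph := fun j =>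
    starSub (BCDC n) (fun i : Fin (t + 1) => edV hn0 (zV n) (s j + (i : ℕ)))
      (fun i hi => hadjs (zV n) j i hi) with hAv
  set Aw : ℕ → (BCDC n).Subgraph := fun j =>
    starSub (BCDC n) (fun i : Fin (t + 1) => edV hn0 (wV n) (s j + (i : ℕ)))
      (fun i hi => hadjs (wV n) j i hi) with hAw
  -- the extra star
  set ddx : ℕ → ℕ := fun i => if i = 0 then 0 else i - 1 with hddx
  have hddx_lt : ∀ i : ℕ, i ≤ t → ddx i < n := by
    intro i hi
    show (if i = 0 then 0 else i - 1) < n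
    split_ifs <;> omega
  have hddx_ne1 : ∀ i : ℕ, i ≠ 1 → i ≠ 2 → ddx i ≠ 1 := by
    intro i h1 h2
    show (if i = 0 then 0 else i - 1) ≠ 1
    split_ifs <;> omega
  set φx : Fin (t + 1) → (crossedCube n).edgeSet := fun i =>
    if (i : ℕ) = 1 then edV hn0 (zV n) 1
    else if (i : ℕ) = 2 then edV hn0 (wV n) 1
    else edV hn0 (e1V n) (ddx (i : ℕ)) with hφx
  have hφx0 : φx 0 = edV hn0 (e1V n) 0 := by
    rw [hφx]
    simp only
    rw [if_neg (by simp), if_neg (by simp)]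
    congr 1
  have hcf : edV hn0 (e1V n) 0 = edV hn0 (f1V n) 0 := by
    apply Subtype.ext
    rw [edV_val hn0 _ hn0, edV_val hn0 _ hn0, nbr_f10 (by omega)]
    show s(e1V n, f1V n) = s(f1V n, e1V n)
    exact Sym2.eq_swap
  have hadjx : ∀ i : Fin (t + 1), i ≠ 0 → (BCDC n).Adj (φx 0) (φx i) := by
    intro i hi
    have hi' : (i : ℕ) ≠ 0 := fun h => hi (Fin.ext h)
    have hit : (i : ℕ) ≤ t := by omega
    rw [hφx0, hφx]
    simp only
    split_ifs with h1 h2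
    · -- leaf edV z 1
      exact (line_adj_touch hn0 (zV n) (by omega) hn0
        ((z_ne_f1 hn).symm : nbr n (nbr n (zV n) 1) 0 ≠ zV n)).symm
    · -- leaf edV w 1
      rw [hcf]
      have hadj := line_adj_touch hn0 (wV n) (show 1 < n by omega) (show 0 < n by omega)
        (by rw [nbr_w1 (by omega)]
            rw [nbr_f10 (by omega)]
            exact (w_ne_e1 hn).symm)
      rw [nbr_w1 (by omega)] at hadj
      exact hadj.symm
    · -- leaf edV e1 (i - 1)
      have hd : ddx (i : ℕ) = (i : ℕ) - 1 := by
        show (if (i : ℕ) = 0 then 0 else (i : ℕ) - 1) = _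
        rw [if_neg hi']
      rw [hd]
      exact line_adj_same hn0 (e1V n) hn0 (by omega) (by omega)
  have hinjx : Function.Injective φx := by
    intro i i' h
    rw [hφx] at h
    simp only at h
    have hit : (i : ℕ) ≤ t := by omega
    have hit' : (i' : ℕ) ≤ t := by omega
    have hz_e1 : ∀ d : ℕ, d < n → d ≠ 1 → edV hn0 (zV n) 1 ≠ edV hn0 (e1V n) d := by
      intro d hdn hd1
      exact edV_ne2 hn0 (by omega) hdn (z_ne_e1 hn) (nbr_e1_ne_z hn hdn hd1).symm
    have hw_e1 : ∀ d : ℕ, d < n → edV hn0 (wV n) 1 ≠ edV hn0 (e1V n) d := by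
      intro d hdn
      exact edV_ne2 hn0 (by omega) hdn (w_ne_e1 hn) (nbr_e1_ne_w hn hdn).symm
    have hz_w : edV hn0 (zV n) 1 ≠ edV hn0 (wV n) 1 :=
      edV_ne2 hn0 (by omega) (by omega) (z_ne_w hn)
        (by rw [nbr_w1 (by omega)]; exact z_ne_f1 hn)
    split_ifs at h with h1 h2 h3 h4 h5 h6 h7 h8 h9 h10 <;>
      first
        | exact Fin.ext (by omega)
        | exact absurd h hz_w
        | exact absurd h.symm hz_w
        | exact absurd h (hz_e1 _ (hddx_lt _ hit') (hddx_ne1 _ (by omega) (by omega)))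
        | exact absurd h.symm (hz_e1 _ (hddx_lt _ hit) (hddx_ne1 _ (by omega) (by omega)))
        | exact absurd h (hw_e1 _ (hddx_lt _ hit'))
        | exact absurd h.symm (hw_e1 _ (hddx_lt _ hit))
        | (have hed := edV_inj hn0 _ (hddx_lt _ hit) (hddx_lt _ hit') h
           have hval : (if (i : ℕ) = 0 then 0 else (i : ℕ) - 1) =
               (if (i' : ℕ) = 0 then 0 else (i' : ℕ) - 1) := hed
           split_ifs at hval <;> exact Fin.ext (by omega))
  set X : (BCDC n).Subgraph := starSub (BCDC n) φx hadjx with hX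
  set F : Finset (BCDC n).Subgraph :=
    ((Finset.range q).image Av ∪ (Finset.range q).image Aw) ∪ {X} with hF
  -- location of k in [2, n-1]
  have hloc : ∀ k, 2 ≤ k → k < n → ∃ j < q, ∃ i : Fin (t + 1), s j + (i : ℕ) = k := by
    intro k hk1 hkn
    set j := (k - 2) / (1 + t) with hj
    have h1 := Nat.div_add_mod (k - 2) (1 + t)
    rw [← hj] at h1
    have h2 := Nat.mod_lt (k - 2) (show 0 < 1 + t by omega)
    have hjq : j < q := by
      have hlt : (1 + t) * j < (1 + t) * q := by
        rw [← hq]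
        generalize hP : (1 + t) * j = P at h1
        omega
      exact Nat.lt_of_mul_lt_mul_left hlt
    have hmul : (1 + t) * (j + 1) ≤ (1 + t) * q := Nat.mul_le_mul_left _ (by omega)
    have h1' : j * (t + 1) + (k - 2) % (1 + t) = k - 2 := by
      rw [show j * (t + 1) = (1 + t) * j from by ring]; exact h1
    have hmul' : j * (t + 1) + (1 + t) ≤ n - 2 := by
      rw [show j * (t + 1) + (1 + t) = (1 + t) * (j + 1) from by ring, hq]
      exact hmul
    have hsj : s j = j * (t + 1) + 2 := by
      rw [hs]
      simp only
      exact min_eq_left (by omega)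
    refine ⟨j, hjq, ⟨k - s j, by omega⟩, show s j + (k - s j) = k by omega⟩
  refine structConn_le_of hn0 t _ F ?_ ?_ ?_ ?_
  · intro A hA
    rw [hF, Finset.mem_union, Finset.mem_union, Finset.mem_image, Finset.mem_image,
      Finset.mem_singleton] at hA
    rcases hA with (⟨j, _, rfl⟩ | ⟨j, _, rfl⟩) | rfl
    · exact starSub_iso _ _ (hinj (zV n) j)
    · exact starSub_iso _ _ (hinj (wV n) j)
    · exact starSub_iso _ _ hinjx
  · intro k hk1 hkn
    have hXF : X ∈ F := by
      rw [hF, Finset.mem_union]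
      exact Or.inr (Finset.mem_singleton_self _)
    rcases eq_or_ne k 1 with rfl | hk2
    · constructor
      · refine mem_cutVerts.2 ⟨X, hXF, ⟨⟨1, by omega⟩, ?_⟩⟩
        show φx ⟨1, by omega⟩ = _
        rw [hφx]
        simp only
        simp
      · refine mem_cutVerts.2 ⟨X, hXF, ⟨⟨2, by omega⟩, ?_⟩⟩
        show φx ⟨2, by omega⟩ = _
        rw [hφx]
        simp only
        rw [if_neg (by omega)]
        simp
    · obtain ⟨j, hjq, i, hji⟩ := hloc k (by omega) hkn
      constructor
      · refine mem_cutVerts.2 ⟨Av j, ?_, ⟨i, show edV hn0 (zV n) (s j + (i : ℕ)) = _ from by rw [hji]⟩⟩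
        rw [hF, Finset.mem_union, Finset.mem_union]
        exact Or.inl (Or.inl (Finset.mem_image.2 ⟨j, Finset.mem_range.2 hjq, rfl⟩))
      · refine mem_cutVerts.2 ⟨Aw j, ?_, ⟨i, show edV hn0 (wV n) (s j + (i : ℕ)) = _ from by rw [hji]⟩⟩
        rw [hF, Finset.mem_union, Finset.mem_union]
        exact Or.inl (Or.inr (Finset.mem_image.2 ⟨j, Finset.mem_range.2 hjq, rfl⟩))
  · intro hmem
    obtain ⟨A, hA, hvA⟩ := mem_cutVerts.1 hmem
    rw [hF, Finset.mem_union, Finset.mem_union, Finset.mem_image, Finset.mem_image,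
      Finset.mem_singleton] at hA
    rcases hA with (⟨j, _, rfl⟩ | ⟨j, _, rfl⟩) | rfl
    · obtain ⟨i, hi⟩ := hvA
      have hi' : edV hn0 (zV n) (s j + (i : ℕ)) = edV hn0 (zV n) 0 := hi
      have := edV_inj hn0 (zV n) (hsub j i) hn0 hi'
      have := hs1 j
      omega
    · obtain ⟨i, hi⟩ := hvA
      have hi' : edV hn0 (wV n) (s j + (i : ℕ)) = edV hn0 (zV n) 0 := hi
      exact absurd hi' (edV_ne2' hn0 (hsub j i) hn0 (z_ne_w hn).symm
        (nbr_w_ne_z hn (hsub j i) (by have := hs1 j; omega)))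
    · obtain ⟨i, hi⟩ := hvA
      have hi' : φx i = edV hn0 (zV n) 0 := hi
      rw [hφx] at hi'
      simp only at hi'
      have hit : (i : ℕ) ≤ t := by omega
      split_ifs at hi' with h1 h2
      · exact absurd (edV_inj hn0 (zV n) (by omega) hn0 hi') (by omega)
      · exact absurd hi' (edV_ne2' hn0 (by omega) hn0 (z_ne_w hn).symm
          (by rw [nbr_w1 (by omega)]; exact (z_ne_f1 hn).symm))
      · refine absurd hi' (edV_ne2 hn0 (hddx_lt _ hit) hn0 (z_ne_e1 hn).symm ?_)
        intro hh
        exact (w_ne_e1 hn).symm (show e1V n = wV n from hh)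
  · rw [hF]
    calc (((Finset.range q).image Av ∪ (Finset.range q).image Aw) ∪ {X}).card
        ≤ ((Finset.range q).image Av ∪ (Finset.range q).image Aw).card + ({X} : Finset _).card :=
          Finset.card_union_le _ _
      _ ≤ (((Finset.range q).image Av).card + ((Finset.range q).image Aw).card) + 1 := by
          refine Nat.add_le_add (Finset.card_union_le _ _) (by simp)
      _ ≤ (q + q) + 1 := by
          refine Nat.add_le_add (Nat.add_le_add ?_ ?_) le_rfl <;>
            exact Finset.card_image_le.trans (by simp)
      _ = 2 * q + 1 := by ring

end CQAux

/-- For `n ≥ 4`, `2 ≤ t ≤ 2n - 3` and `r` the remainder of `n - 1` divided by `1 + t`: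
`κ(B_n; K_{1,t}) ≤ (2n-4)/(1+t) + 1` if `2 ≤ t ≤ n - 3` and `r = 1`, and
`κ(B_n; K_{1,t}) ≤ 2⌈(n-1)/(1+t)⌉` otherwise. -/
theorem bcdc_star_structConn_upper (n t r : ℕ) (hn : 4 ≤ n) (ht1 : 2 ≤ t)
    (ht2 : t ≤ 2 * n - 3) (hr : r = (n - 1) % (1 + t)) :
    (t ≤ n - 3 ∧ r = 1 →
      (BCDC n).structConn (_root_.starGraph t) ≤ (2 * n - 4) / (1 + t) + 1) ∧
    (¬ (t ≤ n - 3 ∧ r = 1) →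
      (BCDC n).structConn (_root_.starGraph t) ≤ 2 * ((n - 1 + t) / (1 + t))) := by
  constructor
  · rintro ⟨ht3, hr1⟩
    have hmod : (n - 1) % (1 + t) = 1 := by rw [← hr]; exact hr1
    set q := (n - 1) / (1 + t) with hqdef
    have hdm := Nat.div_add_mod (n - 1) (1 + t)
    rw [← hqdef, hmod] at hdm
    have hq : n - 2 = (1 + t) * q := by
      generalize hP : (1 + t) * q = P at hdm ⊢
      omega
    have hbound := CQAux.caseC t q hn ht1 ht3 hq
    have harith : (2 * n - 4) / (1 + t) = 2 * q := by
      have h24 : 2 * n - 4 = (1 + t) * (2 * q) := by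
        have h2 : 2 * n - 4 = 2 * (n - 2) := by omega
        rw [h2, hq]; ring
      rw [h24, Nat.mul_div_cancel_left _ (show 0 < 1 + t by omega)]
    rw [harith]
    exact hbound
  · intro hno
    rcases le_or_gt t (n - 2) with hle | hgt
    · exact CQAux.caseA t hn ht1 hle
    · have hb := CQAux.caseB t hn (by omega) ht2
      have hm1 : (n - 1 + t) / (1 + t) = 1 := by
        have h1 : 1 ≤ (n - 1 + t) / (1 + t) := (Nat.one_le_div_iff (by omega)).2 (by omega)
        have h2 : (n - 1 + t) / (1 + t) < 2 := (Nat.div_lt_iff_lt_mul (by omega)).2 (by omega)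
        omega
      rw [hm1]
      simpa using hb
end

section
/- Let n ≥ 4 and 4 ≤ k ≤ 2n − 1 be integers. Then the P_k-structure connectivity of the BCDC network satisfies κ(B_n; P_k) ≤ (2n−2)/k if 4 ≤ k ≤ n − 1 and k divides n − 1, and κ(B_n; P_k) ≤ ⌈(2n−1)/k⌉ otherwise. -/
open SimpleGraph

namespace BCDCaux

open SimpleGraph

/-! ### Vertex gadgets -/

def zeroV : (n : ℕ) → CQVertex n
  | 0 => ()
  | n + 1 => (false, zeroV n)

def unitV : (n : ℕ) → ℕ → CQVertex n
  | 0, _ => ()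
  | n + 1, j => if j = n then (true, zeroV n) else (false, unitV n j)

@[simp] lemma bit_zeroV (n i : ℕ) : CQbit n (zeroV n) i = false := by
  induction n with
  | zero => rfl
  | succ n ih => simp [CQbit, zeroV, ih]

lemma bit_unitV : ∀ (n j i : ℕ), j < n → CQbit n (unitV n j) i = decide (i = j)
  | 0, _, _, h => by omega
  | n + 1, j, i, h => by
    by_cases hjn : j = n
    · subst hjn
      rcases eq_or_ne i j with rfl | hne
      · simp [unitV, CQbit]
      · simp [unitV, CQbit, hne]
    · have hj' : j < n := by omega
      rcases eq_or_ne i n with rfl | hne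
      · simp [unitV, hjn, CQbit]
        omega
      · simp [unitV, hjn, CQbit, hne, bit_unitV n j i hj']

lemma eq_of_bits : ∀ (n : ℕ) (x y : CQVertex n),
    (∀ i, i < n → CQbit n x i = CQbit n y i) → x = y
  | 0, _, _, _ => rfl
  | n + 1, x, y, h => by
    obtain ⟨a, x'⟩ := x
    obtain ⟨b, y'⟩ := y
    have h1 : a = b := by simpa [CQbit] using h n (by omega)
    have h2 : x' = y' := eq_of_bits n x' y' (fun i hi => by
      have := h i (by omega)
      simpa [CQbit, Nat.ne_of_lt hi] using this)
    rw [h1, h2]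

lemma unitV_ne_zeroV {n j : ℕ} (hj : j < n) : unitV n j ≠ zeroV n := fun h => by
  have := congrArg (fun x => CQbit n x j) h
  simp [bit_unitV n j j hj] at this

lemma unitV_inj {n j j' : ℕ} (hj : j < n) (hj' : j' < n)
    (h : unitV n j = unitV n j') : j = j' := by
  by_contra hne
  have := congrArg (fun x => CQbit n x j) h
  simp [bit_unitV n j j hj, bit_unitV n j' j hj'] at this
  exact hne this

end BCDCaux
namespace BCDCaux

open SimpleGraph

lemma pairRel_zero_right {a b : Bool} (h : pairRel a b false false) :
    a = false ∧ b = false := by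
  rcases h with ⟨h1, _, h3⟩ | ⟨_, h2, _⟩
  · exact ⟨h3.symm, h1⟩
  · simp at h2

lemma pairRel_zero_left {a b : Bool} (h : pairRel false false a b) :
    a = false ∧ b = false := by
  rcases h with ⟨_, h2, h3⟩ | ⟨h1, _, _⟩
  · exact ⟨h3, h2⟩
  · simp at h1

lemma pairRel_refl (a : Bool) : pairRel a false a false := Or.inl ⟨rfl, rfl, rfl⟩

lemma force_zero (n : ℕ) (x : CQVertex n)
    (hp : ∀ i, i < n / 2 → CQbit n x (2 * i + 1) = false ∧ CQbit n x (2 * i) = false)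
    (ho : n % 2 = 1 → CQbit n x (n - 1) = false) : x = zeroV n := by
  apply eq_of_bits
  intro i hi
  rw [bit_zeroV]
  by_cases hlast : n % 2 = 1 ∧ i = n - 1
  · rw [hlast.2]; exact ho hlast.1
  · have h2 := hp (i / 2) (by omega)
    rcases Nat.even_or_odd i with ⟨t, ht⟩ | ⟨t, ht⟩
    · have hti : 2 * (i / 2) = i := by omega
      rw [← hti]; exact h2.2
    · have hti : 2 * (i / 2) + 1 = i := by omega
      rw [← hti]; exact h2.1

@[simp] lemma zeroV_succ (n : ℕ) : zeroV (n + 1) = (false, zeroV n) := rfl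

lemma unitV_succ_self (n : ℕ) : unitV (n + 1) n = (true, zeroV n) := by simp [unitV]; rfl

lemma unitV_succ_lt {n j : ℕ} (h : j ≠ n) : unitV (n + 1) j = (false, unitV n j) := by
  simp [unitV, h]; rfl

lemma CQrel_succ (n : ℕ) (a b : Bool) (x y : CQVertex n) :
    CQrel (n + 1) (a, x) (b, y) ↔
      ((a = b ∧ CQrel n x y) ∨
        (a ≠ b ∧ ((n + 1) % 2 = 0 → CQbit n x (n - 1) = CQbit n y (n - 1)) ∧
          ∀ i, i < n / 2 → pairRel (CQbit n x (2 * i + 1)) (CQbit n x (2 * i))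
            (CQbit n y (2 * i + 1)) (CQbit n y (2 * i)))) := Iff.rfl

/-- `CQrel` holds between a unit vector and zero. -/
lemma rel_unitV_zero : ∀ (n j : ℕ), j < n → CQrel n (unitV n j) (zeroV n)
  | 0, _, h => by omega
  | n + 1, j, h => by
    by_cases hjn : j = n
    · subst hjn
      rw [unitV_succ_self, zeroV_succ, CQrel_succ]
      refine Or.inr ⟨by simp, fun _ => rfl, fun i _ => by
        simpa using pairRel_refl false⟩
    · rw [unitV_succ_lt hjn, zeroV_succ, CQrel_succ]
      exact Or.inl ⟨rfl, rel_unitV_zero n j (by omega)⟩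

/-- Anything `CQrel`-related to zero is a unit vector. -/
lemma rel_zero : ∀ (n : ℕ) (x : CQVertex n),
    (CQrel n (zeroV n) x ∨ CQrel n x (zeroV n)) → ∃ j, j < n ∧ x = unitV n j
  | 0, x, h => by simp [CQrel] at h
  | n + 1, x, h => by
    obtain ⟨b, x'⟩ := x
    rw [zeroV_succ, CQrel_succ, CQrel_succ] at h
    have key : (b = false ∧ (CQrel n (zeroV n) x' ∨ CQrel n x' (zeroV n))) ∨
        (b = true ∧ x' = zeroV n) := by
      rcases h with h | h <;> rcases h with ⟨h1, h2⟩ | ⟨h1, h2, h3⟩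
      · exact Or.inl ⟨h1.symm, Or.inl h2⟩
      · refine Or.inr ⟨by revert h1; cases b <;> simp, force_zero n x' ?_ ?_⟩
        · intro i hi
          have := h3 i hi
          simp only [bit_zeroV] at this
          exact ⟨(pairRel_zero_left this).1, (pairRel_zero_left this).2⟩
        · intro hodd
          have := h2 (by omega)
          simpa [bit_zeroV] using this.symm
      · exact Or.inl ⟨h1, Or.inr h2⟩
      · refine Or.inr ⟨by revert h1; cases b <;> simp, force_zero n x' ?_ ?_⟩
        · intro i hi
          have := h3 i hi
          simp only [bit_zeroV] at this
          exact ⟨(pairRel_zero_right this).1, (pairRel_zero_right this).2⟩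
        · intro hodd
          have := h2 (by omega)
          simpa [bit_zeroV] using this
    rcases key with ⟨rfl, h2⟩ | ⟨rfl, rfl⟩
    · obtain ⟨j, hj, rfl⟩ := rel_zero n x' h2
      exact ⟨j, by omega, (unitV_succ_lt (Nat.ne_of_lt hj)).symm⟩
    · exact ⟨n, by omega, (unitV_succ_self n).symm⟩

end BCDCaux
namespace BCDCaux

open SimpleGraph

/-! ### The double-bit vertex -/

def dblV : (n : ℕ) → CQVertex n
  | 0 => ()
  | 1 => (true, ())
  | 2 => (true, (true, ()))
  | (n + 3) => (false, dblV (n + 2))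

lemma CQbit_succ (n : ℕ) (a : Bool) (x : CQVertex n) (i : ℕ) :
    CQbit (n + 1) (a, x) i = if i = n then a else CQbit n x i := rfl

lemma bit_dblV : ∀ (n : ℕ), 2 ≤ n → ∀ i, CQbit n (dblV n) i = decide (i ≤ 1)
  | 0, h => by omega
  | 1, h => by omega
  | 2, _ => by
    intro i
    rw [show dblV 2 = (@Prod.mk Bool (CQVertex 1) true (unitV 1 0) : CQVertex 2) from rfl, CQbit_succ]
    rcases i with _ | _ | i <;> simp [CQbit_succ, CQbit, bit_unitV 1 0] <;> rfl
  | (n + 3), _ => by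
    intro i
    rw [show dblV (n + 3) = (false, dblV (n + 2)) from rfl, CQbit_succ]
    rcases eq_or_ne i (n + 2) with rfl | hne
    · rw [if_pos rfl]
      have : ¬ (n + 2 ≤ 1) := by omega
      simp [this]
    · rw [if_neg hne, bit_dblV (n + 2) (by omega) i]

lemma rel_dblV : ∀ (n : ℕ), CQrel (n + 2) (dblV (n + 2)) (unitV (n + 2) 1)
  | 0 => by
    rw [show dblV 2 = (@Prod.mk Bool (CQVertex 1) true (unitV 1 0) : CQVertex 2) from rfl,
      show unitV 2 1 = (@Prod.mk Bool (CQVertex 1) true (zeroV 1) : CQVertex 2) from rfl, CQrel_succ]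
    exact Or.inl ⟨rfl, rel_unitV_zero 1 0 (by omega)⟩
  | (n + 1) => by
    rw [show dblV (n + 3) = (false, dblV (n + 2)) from rfl,
      unitV_succ_lt (by omega : (1 : ℕ) ≠ n + 2), CQrel_succ]
    exact Or.inl ⟨rfl, rel_dblV n⟩

lemma dblV_ne_zeroV {n : ℕ} (h : 2 ≤ n) : dblV n ≠ zeroV n := fun he => by
  have := congrArg (fun x => CQbit n x 0) he
  simp [bit_dblV n h 0] at this

lemma dblV_ne_unitV {n j : ℕ} (h : 2 ≤ n) (hj : j < n) : dblV n ≠ unitV n j := fun he => by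
  have h0 := congrArg (fun x => CQbit n x 0) he
  have h1 := congrArg (fun x => CQbit n x 1) he
  simp [bit_dblV n h, bit_unitV n j 0 hj, bit_unitV n j 1 hj] at h0 h1
  omega

/-! ### Named vertices in `CQ_{N+1}` -/

variable {N : ℕ}

/-- `0·e_j` -/
def aV (N j : ℕ) : CQVertex (N + 1) := (false, unitV N j)

/-- `1·e_j` -/
def bV (N j : ℕ) : CQVertex (N + 1) := (true, unitV N j)

/-- `1·0^N` -/
def wV (N : ℕ) : CQVertex (N + 1) := (true, zeroV N)

/-- `0·dbl` -/
def dV (N : ℕ) : CQVertex (N + 1) := (false, dblV N)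

lemma adj_zero_aV {j : ℕ} (hj : j < N) : (crossedCube (N + 1)).Adj (zeroV (N + 1)) (aV N j) := by
  rw [crossedCube, SimpleGraph.fromRel_adj]
  constructor
  · intro h
    exact unitV_ne_zeroV hj (congrArg Prod.snd h).symm
  · right
    rw [show aV N j = unitV (N + 1) j from (unitV_succ_lt (Nat.ne_of_lt hj)).symm]
    exact rel_unitV_zero (N + 1) j (by omega)

lemma adj_zero_wV : (crossedCube (N + 1)).Adj (zeroV (N + 1)) (wV N) := by
  rw [crossedCube, SimpleGraph.fromRel_adj]
  constructor
  · intro h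
    exact Bool.false_ne_true (congrArg Prod.fst h)
  · right
    rw [show wV N = unitV (N + 1) N from (unitV_succ_self N).symm]
    exact rel_unitV_zero (N + 1) N (by omega)

lemma adj_wV_bV {j : ℕ} (hj : j < N) : (crossedCube (N + 1)).Adj (wV N) (bV N j) := by
  rw [crossedCube, SimpleGraph.fromRel_adj]
  constructor
  · intro h
    exact unitV_ne_zeroV hj (congrArg Prod.snd h).symm
  · right
    rw [wV, bV, CQrel_succ]
    exact Or.inl ⟨rfl, rel_unitV_zero N j hj⟩

lemma adj_aV_bV (h2 : 2 ≤ N) : (crossedCube (N + 1)).Adj (aV N 1) (bV N 1) := by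
  rw [crossedCube, SimpleGraph.fromRel_adj]
  constructor
  · intro h
    exact Bool.false_ne_true (congrArg Prod.fst h)
  · left
    rw [aV, bV, CQrel_succ]
    refine Or.inr ⟨by simp, fun _ => rfl, fun i hi => ?_⟩
    have hb : CQbit N (unitV N 1) (2 * i) = false := by
      rw [bit_unitV N 1 (2 * i) (by omega)]
      simp only [decide_eq_false_iff_not]
      omega
    rw [hb]
    exact pairRel_refl _
  
lemma adj_dV_aV (h2 : 2 ≤ N) : (crossedCube (N + 1)).Adj (dV N) (aV N 1) := by
  rw [crossedCube, SimpleGraph.fromRel_adj]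
  constructor
  · intro h
    exact dblV_ne_unitV h2 (by omega) (congrArg Prod.snd h)
  · left
    rw [dV, aV, CQrel_succ]
    obtain ⟨m, rfl⟩ : ∃ m, N = m + 2 := ⟨N - 2, by omega⟩
    exact Or.inl ⟨rfl, rel_dblV m⟩

/-- Neighborhood of zero in the crossed cube. -/
lemma adj_zero_iff {x : CQVertex (N + 1)} (h : (crossedCube (N + 1)).Adj (zeroV (N + 1)) x) :
    (∃ j, j < N ∧ x = aV N j) ∨ x = wV N := by
  rw [crossedCube, SimpleGraph.fromRel_adj] at h
  obtain ⟨j, hj, rfl⟩ := rel_zero (N + 1) x h.2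
  by_cases hne : j = N
  · subst hne
    exact Or.inr (unitV_succ_self j)
  · exact Or.inl ⟨j, by omega, unitV_succ_lt hne⟩

/-- Neighborhood of `w = 1·0^N` in the crossed cube. -/
lemma adj_wV_iff {x : CQVertex (N + 1)} (h : (crossedCube (N + 1)).Adj (wV N) x) :
    (∃ j, j < N ∧ x = bV N j) ∨ x = zeroV (N + 1) := by
  rw [crossedCube, SimpleGraph.fromRel_adj] at h
  obtain ⟨b, x'⟩ := x
  have h2 := h.2
  rw [wV, CQrel_succ, CQrel_succ] at h2
  have key : (b = true ∧ (CQrel N (zeroV N) x' ∨ CQrel N x' (zeroV N))) ∨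
      (b = false ∧ x' = zeroV N) := by
    rcases h2 with h2 | h2 <;> rcases h2 with ⟨h1, hr⟩ | ⟨h1, hc1, hc2⟩
    · exact Or.inl ⟨h1.symm, Or.inl hr⟩
    · refine Or.inr ⟨by revert h1; cases b <;> simp, force_zero N x' ?_ ?_⟩
      · intro i hi
        have := hc2 i hi
        simp only [bit_zeroV] at this
        exact ⟨(pairRel_zero_left this).1, (pairRel_zero_left this).2⟩
      · intro hodd
        have := hc1 (by omega)
        simpa [bit_zeroV] using this.symm
    · exact Or.inl ⟨h1, Or.inr hr⟩
    · refine Or.inr ⟨by revert h1; cases b <;> simp, force_zero N x' ?_ ?_⟩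
      · intro i hi
        have := hc2 i hi
        simp only [bit_zeroV] at this
        exact ⟨(pairRel_zero_right this).1, (pairRel_zero_right this).2⟩
      · intro hodd
        have := hc1 (by omega)
        simpa [bit_zeroV] using this
  rcases key with ⟨rfl, hr⟩ | ⟨rfl, rfl⟩
  · obtain ⟨j, hj, rfl⟩ := rel_zero N x' hr
    exact Or.inl ⟨j, hj, rfl⟩
  · exact Or.inr rfl

end BCDCaux
namespace BCDCaux

open SimpleGraph

variable {V : Type*} {W : Type*}

/-- From a consecutive-adjacent injective listing of `k` vertices we get a subgraph
isomorphic to the path graph `P_k`. -/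
lemma exists_path_subgraph (G : SimpleGraph V) (k s : ℕ) (hk : 0 < k) (p : ℕ → V)
    (hinj : ∀ i j, s ≤ i → i < s + k → s ≤ j → j < s + k → p i = p j → i = j)
    (hadj : ∀ i, s ≤ i → i + 1 < s + k → G.Adj (p i) (p (i + 1))) :
    ∃ A : G.Subgraph, A.verts = p '' Set.Ico s (s + k) ∧ Nonempty (A.coe ≃g pathGraph k) := by
  classical
  refine ⟨⟨p '' Set.Ico s (s + k),
    fun a b => ∃ i, s ≤ i ∧ i + 1 < s + k ∧
      ((a = p i ∧ b = p (i + 1)) ∨ (a = p (i + 1) ∧ b = p i)), ?_, ?_, ?_⟩, rfl, ?_⟩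
  · rintro a b ⟨i, h1, h2, (⟨rfl, rfl⟩ | ⟨rfl, rfl⟩)⟩
    · exact hadj i h1 h2
    · exact (hadj i h1 h2).symm
  · rintro a b ⟨i, h1, h2, (⟨rfl, rfl⟩ | ⟨rfl, rfl⟩)⟩
    · exact ⟨i, ⟨h1, by omega⟩, rfl⟩
    · exact ⟨i + 1, ⟨by omega, h2⟩, rfl⟩
  · constructor; rintro a b ⟨i, h1, h2, h3⟩
    exact ⟨i, h1, h2, h3.symm.imp And.symm And.symm⟩
  · set A : G.Subgraph := ⟨p '' Set.Ico s (s + k),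
      fun a b => ∃ i, s ≤ i ∧ i + 1 < s + k ∧
        ((a = p i ∧ b = p (i + 1)) ∨ (a = p (i + 1) ∧ b = p i)), _, _, _⟩
    have hmem : ∀ t : Fin k, p (s + t.val) ∈ A.verts := fun t =>
      ⟨s + t.val, ⟨by omega, by omega⟩, rfl⟩
    have hbij : Function.Bijective (fun t : Fin k => (⟨p (s + t.val), hmem t⟩ : A.verts)) := by
      constructor
      · intro t t' h
        have := hinj (s + t.val) (s + t'.val) (by omega) (by omega) (by omega) (by omega)
          (by simpa using congrArg Subtype.val h)
        exact Fin.ext (by omega)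
      · rintro ⟨a, ⟨i, ⟨hi1, hi2⟩, rfl⟩⟩
        refine ⟨⟨i - s, by omega⟩, ?_⟩
        apply Subtype.ext
        simp only
        congr 1
        omega
    refine ⟨(RelIso.mk (Equiv.ofBijective _ hbij) ?_).symm⟩
    intro t t'
    simp only [Equiv.ofBijective_apply, Subgraph.coe_adj]
    constructor
    · rintro ⟨i, h1, h2, (⟨he1, he2⟩ | ⟨he1, he2⟩)⟩
      · have e1 : s + t.val = i := hinj _ _ (by omega) (by omega) h1 (by omega) he1
        have e2 : s + t'.val = i + 1 := hinj _ _ (by omega) (by omega) (by omega) h2 he2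
        rw [pathGraph_adj]
        left; omega
      · have e1 : s + t.val = i + 1 := hinj _ _ (by omega) (by omega) (by omega) h2 he1
        have e2 : s + t'.val = i := hinj _ _ (by omega) (by omega) h1 (by omega) he2
        rw [pathGraph_adj]
        right; omega
    · intro h
      rw [pathGraph_adj] at h
      rcases h with h | h
      · exact ⟨s + t.val, by omega, by omega, Or.inl ⟨rfl, by congr 1; omega⟩⟩
      · exact ⟨s + t'.val, by omega, by omega, Or.inr ⟨by congr 1; omega, rfl⟩⟩

/-- `structConn` upper bound from an explicit family of path subgraphs. -/
lemma structConn_le_of_family (G : SimpleGraph V) (H : SimpleGraph W) [DecidableEq G.Subgraph] (M : ℕ)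
    (S : Fin M → G.Subgraph) (hiso : ∀ t, Nonempty ((S t).coe ≃g H))
    (hcut : G.IsSubgraphCut (Finset.image S Finset.univ)) :
    G.structConn H ≤ M := by
  refine le_trans (Nat.sInf_le ⟨Finset.image S Finset.univ, ⟨hcut, ?_⟩, rfl⟩) ?_
  · intro A hA
    obtain ⟨t, _, rfl⟩ := Finset.mem_image.mp hA
    exact hiso t
  · exact le_trans (Finset.card_image_le) (by simp)

lemma cutVerts_image (G : SimpleGraph V) [DecidableEq G.Subgraph] (M : ℕ) (S : Fin M → G.Subgraph) :
    SimpleGraph.cutVerts (Finset.image S Finset.univ) = ⋃ t : Fin M, (S t).verts := by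
  ext v
  simp [SimpleGraph.cutVerts]

end BCDCaux
namespace BCDCaux

open SimpleGraph

/-! ### Vertex distinctness -/

variable {N : ℕ}

lemma fst_eq {N : ℕ} {a b : Bool} {x y : CQVertex N}
    (h : ((a, x) : CQVertex (N + 1)) = (b, y)) : a = b :=
  congrArg (fun v : CQVertex (N + 1) => v.1) h

lemma snd_eq {N : ℕ} {a b : Bool} {x y : CQVertex N}
    (h : ((a, x) : CQVertex (N + 1)) = (b, y)) : x = y :=
  congrArg (fun v : CQVertex (N + 1) => v.2) h

lemma zeroV_ne_aV {j : ℕ} (hj : j < N) : (zeroV (N + 1) : CQVertex (N + 1)) ≠ aV N j :=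
  fun h => unitV_ne_zeroV hj (snd_eq h).symm

lemma zeroV_ne_bV (j : ℕ) : (zeroV (N + 1) : CQVertex (N + 1)) ≠ bV N j :=
  fun h => Bool.false_ne_true (fst_eq h)

lemma zeroV_ne_wV : (zeroV (N + 1) : CQVertex (N + 1)) ≠ wV N :=
  fun h => Bool.false_ne_true (fst_eq h)

lemma aV_ne_bV (j j' : ℕ) : (aV N j : CQVertex (N + 1)) ≠ bV N j' :=
  fun h => Bool.false_ne_true (fst_eq h)

lemma aV_ne_wV (j : ℕ) : (aV N j : CQVertex (N + 1)) ≠ wV N :=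
  fun h => Bool.false_ne_true (fst_eq h)

lemma wV_ne_bV {j : ℕ} (hj : j < N) : (wV N : CQVertex (N + 1)) ≠ bV N j :=
  fun h => unitV_ne_zeroV hj (snd_eq h).symm

lemma aV_inj {j j' : ℕ} (hj : j < N) (hj' : j' < N)
    (h : (aV N j : CQVertex (N + 1)) = aV N j') : j = j' :=
  unitV_inj hj hj' (snd_eq h)

lemma bV_inj {j j' : ℕ} (hj : j < N) (hj' : j' < N)
    (h : (bV N j : CQVertex (N + 1)) = bV N j') : j = j' :=
  unitV_inj hj hj' (snd_eq h)

lemma dV_ne_zeroV (h2 : 2 ≤ N) : (dV N : CQVertex (N + 1)) ≠ zeroV (N + 1) :=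
  fun h => dblV_ne_zeroV h2 (snd_eq h)

lemma dV_ne_aV {j : ℕ} (h2 : 2 ≤ N) (hj : j < N) : (dV N : CQVertex (N + 1)) ≠ aV N j :=
  fun h => dblV_ne_unitV h2 hj (snd_eq h)

lemma dV_ne_bV (j : ℕ) : (dV N : CQVertex (N + 1)) ≠ bV N j :=
  fun h => Bool.false_ne_true (fst_eq h)

lemma dV_ne_wV : (dV N : CQVertex (N + 1)) ≠ wV N :=
  fun h => Bool.false_ne_true (fst_eq h)

/-! ### The chain of `2m+7` edges -/

def sig (m i : ℕ) : ℕ := if i = 1 then m + 2 else if i = m + 2 then 1 else i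

def tau (t : ℕ) : ℕ := if t = 0 then 1 else if t = 1 then 0 else t

lemma sig_lt {m i : ℕ} (h : i < m + 3) : sig m i < m + 3 := by
  unfold sig; split_ifs <;> omega

lemma sig_invol (m i : ℕ) : sig m (sig m i) = i := by
  have h21 : m + 2 ≠ 1 := by omega
  by_cases h1 : i = 1
  · simp [sig, h1, h21]
  · by_cases h2 : i = m + 2
    · simp [sig, h1, h2, h21]
    · simp [sig, h1, h2]

lemma tau_lt {m t : ℕ} (h : t < m + 3) : tau t < m + 3 := by
  unfold tau; split_ifs <;> omega

lemma tau_invol (t : ℕ) : tau (tau t) = t := by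
  by_cases h0 : t = 0
  · simp [tau, h0]
  · by_cases h1 : t = 1
    · simp [tau, h0, h1]
    · simp [tau, h0, h1]

def chain (m i : ℕ) : Sym2 (CQVertex (m + 3 + 1)) :=
  if i < m + 3 then s(zeroV (m + 3 + 1), aV (m + 3) (sig m i))
  else if i = m + 3 then s(aV (m + 3) 1, bV (m + 3) 1)
  else if i < 2 * m + 7 then s(wV (m + 3), bV (m + 3) (tau (i - (m + 4))))
  else s(zeroV (m + 3 + 1), aV (m + 3) 0)

lemma chain_eq_A {m i : ℕ} (h : i < m + 3) :
    chain m i = s(zeroV (m + 3 + 1), aV (m + 3) (sig m i)) := by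
  simp [chain, h]

lemma chain_eq_g (m : ℕ) : chain m (m + 3) = s(aV (m + 3) 1, bV (m + 3) 1) := by
  simp [chain]

lemma chain_eq_B {m i : ℕ} (h1 : m + 4 ≤ i) (h2 : i < 2 * m + 7) :
    chain m i = s(wV (m + 3), bV (m + 3) (tau (i - (m + 4)))) := by
  have e1 : ¬ i < m + 3 := by omega
  have e2 : i ≠ m + 3 := by omega
  simp [chain, e1, e2, h2]

lemma sig_last (m : ℕ) : sig m (m + 2) = 1 := by
  unfold sig; split_ifs <;> omega

lemma chain_mem (m i : ℕ) : chain m i ∈ (crossedCube (m + 3 + 1)).edgeSet := by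
  unfold chain
  split_ifs with h1 h2 h3
  · exact adj_zero_aV (sig_lt h1)
  · exact adj_aV_bV (by omega)
  · exact adj_wV_bV (tau_lt (by omega))
  · exact adj_zero_aV (by omega)

def chainE (m i : ℕ) : (crossedCube (m + 3 + 1)).edgeSet := ⟨chain m i, chain_mem m i⟩

lemma chain_inj {m : ℕ} : ∀ i j, i < 2 * m + 7 → j < 2 * m + 7 →
    chain m i = chain m j → i = j := by
  have hs : ∀ i j, i < m + 3 → j < m + 3 → chain m i = chain m j → i = j := by
    intro i j hi hj h
    rw [chain_eq_A hi, chain_eq_A hj, Sym2.eq_iff] at h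
    rcases h with ⟨-, h2⟩ | ⟨h1, -⟩
    · have := aV_inj (sig_lt hi) (sig_lt hj) h2
      have := congrArg (sig m) this
      rwa [sig_invol, sig_invol] at this
    · exact absurd h1 (zeroV_ne_aV (sig_lt hj))
  have hAg : ∀ i, i < m + 3 → chain m i ≠ chain m (m + 3) := by
    intro i hi h
    rw [chain_eq_A hi, chain_eq_g, Sym2.eq_iff] at h
    rcases h with ⟨h1, -⟩ | ⟨h1, -⟩
    · exact zeroV_ne_aV (by omega) h1
    · exact zeroV_ne_bV 1 h1
  have hAB : ∀ i j, i < m + 3 → m + 4 ≤ j → j < 2 * m + 7 → chain m i ≠ chain m j := by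
    intro i j hi hj1 hj2 h
    rw [chain_eq_A hi, chain_eq_B hj1 hj2, Sym2.eq_iff] at h
    rcases h with ⟨h1, -⟩ | ⟨h1, -⟩
    · exact zeroV_ne_wV h1
    · exact zeroV_ne_bV _ h1
  have hgB : ∀ j, m + 4 ≤ j → j < 2 * m + 7 → chain m (m + 3) ≠ chain m j := by
    intro j hj1 hj2 h
    rw [chain_eq_g, chain_eq_B hj1 hj2, Sym2.eq_iff] at h
    rcases h with ⟨h1, -⟩ | ⟨h1, -⟩
    · exact aV_ne_wV 1 h1
    · exact aV_ne_bV 1 _ h1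
  have hB : ∀ i j, m + 4 ≤ i → i < 2 * m + 7 → m + 4 ≤ j → j < 2 * m + 7 →
      chain m i = chain m j → i = j := by
    intro i j hi1 hi2 hj1 hj2 h
    rw [chain_eq_B hi1 hi2, chain_eq_B hj1 hj2, Sym2.eq_iff] at h
    rcases h with ⟨-, h2⟩ | ⟨h1, -⟩
    · have := bV_inj (tau_lt (by omega)) (tau_lt (by omega)) h2
      have := congrArg tau this
      rw [tau_invol, tau_invol] at this
      omega
    · exact absurd h1 (wV_ne_bV (tau_lt (by omega)))
  intro i j hi hj h
  rcases lt_trichotomy i (m + 3) with hi3 | hi3 | hi3 <;>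
    rcases lt_trichotomy j (m + 3) with hj3 | hj3 | hj3
  · exact hs i j hi3 hj3 h
  · exact absurd (hj3 ▸ h) (hAg i hi3)
  · exact absurd h (hAB i j hi3 (by omega) hj)
  · exact absurd (hi3 ▸ h).symm (hAg j hj3)
  · omega
  · exact absurd (hi3 ▸ h) (hgB j (by omega) hj)
  · exact absurd h.symm (hAB j i hj3 (by omega) hi)
  · exact absurd (hj3 ▸ h).symm (hgB i (by omega) hi)
  · exact hB i j (by omega) hi (by omega) hj h

lemma chainE_adj {m i : ℕ} (h : i + 1 < 2 * m + 7) :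
    ((crossedCube (m + 3 + 1)).lineGraph).Adj (chainE m i) (chainE m (i + 1)) := by
  rw [lineGraph_adj_iff_exists]
  constructor
  · intro heq
    have := chain_inj i (i + 1) (by omega) h (congrArg Subtype.val heq)
    omega
  · show ∃ v, v ∈ chain m i ∧ v ∈ chain m (i + 1)
    rcases lt_trichotomy (i + 1) (m + 3) with h1 | h1 | h1
    · refine ⟨zeroV (m + 3 + 1), ?_, ?_⟩
      · rw [chain_eq_A (by omega), Sym2.mem_iff]; left; rfl
      · rw [chain_eq_A h1, Sym2.mem_iff]; left; rfl
    · have hi : i = m + 2 := by omega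
      subst hi
      refine ⟨aV (m + 3) 1, ?_, ?_⟩
      · rw [chain_eq_A (by omega), sig_last, Sym2.mem_iff]; right; rfl
      · have hg : chain m (m + 2 + 1) = s(aV (m + 3) 1, bV (m + 3) 1) := chain_eq_g m
        rw [hg, Sym2.mem_iff]; left; rfl
    · rcases eq_or_ne i (m + 3) with hi | hi
      · subst hi
        refine ⟨bV (m + 3) 1, ?_, ?_⟩
        · rw [chain_eq_g, Sym2.mem_iff]; right; rfl
        · rw [chain_eq_B (by omega) h, show m + 3 + 1 - (m + 4) = 0 from by omega,
            show tau 0 = 1 from rfl, Sym2.mem_iff]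
          right; rfl
      · refine ⟨wV (m + 3), ?_, ?_⟩
        · rw [chain_eq_B (by omega) (by omega), Sym2.mem_iff]; left; rfl
        · rw [chain_eq_B (by omega) h, Sym2.mem_iff]; left; rfl

end BCDCaux
namespace BCDCaux

open SimpleGraph

/-! ### The isolated edge `e` and the witness edge `f` -/

def eE (m : ℕ) : (crossedCube (m + 3 + 1)).edgeSet :=
  ⟨s(zeroV (m + 3 + 1), wV (m + 3)), adj_zero_wV⟩

def fE (m : ℕ) : (crossedCube (m + 3 + 1)).edgeSet :=
  ⟨s(dV (m + 3), aV (m + 3) 1), adj_dV_aV (by omega)⟩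

lemma eE_ne_fE (m : ℕ) : eE m ≠ fE m := by
  intro h
  replace h : s(zeroV (m + 3 + 1), wV (m + 3)) = s(dV (m + 3), aV (m + 3) 1) := congrArg Subtype.val h; rw [Sym2.eq_iff] at h
  rcases h with ⟨h1, -⟩ | ⟨h1, -⟩
  · exact dV_ne_zeroV (by omega) h1.symm
  · exact zeroV_ne_aV (by omega) h1

lemma eE_ne_chain (m i : ℕ) (hi : i < 2 * m + 7) : (eE m).val ≠ chain m i := by
  intro h
  rw [eE] at h
  rcases lt_trichotomy i (m + 3) with h1 | h1 | h1
  · rw [chain_eq_A h1, Sym2.eq_iff] at h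
    rcases h with ⟨-, h2⟩ | ⟨h2, -⟩
    · exact aV_ne_wV _ h2.symm
    · exact zeroV_ne_aV (sig_lt h1) h2
  · rw [h1, chain_eq_g, Sym2.eq_iff] at h
    rcases h with ⟨h2, -⟩ | ⟨h2, -⟩
    · exact zeroV_ne_aV (by omega) h2
    · exact zeroV_ne_bV _ h2
  · rw [chain_eq_B (by omega) hi, Sym2.eq_iff] at h
    rcases h with ⟨h2, -⟩ | ⟨h2, -⟩
    · exact zeroV_ne_wV h2
    · exact zeroV_ne_bV _ h2

lemma fE_ne_chain (m i : ℕ) (hi : i < 2 * m + 7) : (fE m).val ≠ chain m i := by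
  intro h
  rw [fE] at h
  rcases lt_trichotomy i (m + 3) with h1 | h1 | h1
  · rw [chain_eq_A h1, Sym2.eq_iff] at h
    rcases h with ⟨h2, -⟩ | ⟨h2, -⟩
    · exact dV_ne_zeroV (by omega) h2
    · exact dV_ne_aV (by omega) (sig_lt h1) h2
  · rw [h1, chain_eq_g, Sym2.eq_iff] at h
    rcases h with ⟨h2, -⟩ | ⟨h2, -⟩
    · exact dV_ne_aV (by omega) (by omega) h2
    · exact dV_ne_bV _ h2
  · rw [chain_eq_B (by omega) hi, Sym2.eq_iff] at h
    rcases h with ⟨h2, -⟩ | ⟨h2, -⟩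
    · exact dV_ne_wV h2
    · exact dV_ne_bV _ h2

/-- every line-graph neighbour of `e` is on the chain, at an `A`- or `B`-position. -/
lemma nbr_eE (m : ℕ) (x : (crossedCube (m + 3 + 1)).edgeSet)
    (h : ((crossedCube (m + 3 + 1)).lineGraph).Adj (eE m) x) :
    ∃ i, (i < m + 3 ∨ (m + 4 ≤ i ∧ i < 2 * m + 7)) ∧ x = chainE m i := by
  rw [lineGraph_adj_iff_exists] at h
  obtain ⟨hne, v, hv1, hv2⟩ := h
  rw [show ((eE m : (crossedCube (m + 3 + 1)).edgeSet) : Sym2 (CQVertex (m + 3 + 1)))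
    = s(zeroV (m + 3 + 1), wV (m + 3)) from rfl, Sym2.mem_iff] at hv1
  rcases hv1 with rfl | rfl
  · -- v = zeroV
    obtain ⟨y, hy⟩ := Sym2.mem_iff_exists.mp hv2
    have hadj : (crossedCube (m + 3 + 1)).Adj (zeroV (m + 3 + 1)) y := by
      have hx := x.property
      rw [hy] at hx
      exact hx
    rcases adj_zero_iff hadj with ⟨j, hj, rfl⟩ | rfl
    · refine ⟨sig m j, Or.inl (sig_lt hj), ?_⟩
      apply Subtype.ext
      rw [hy, show ((chainE m (sig m j) : (crossedCube (m + 3 + 1)).edgeSet) :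
        Sym2 (CQVertex (m + 3 + 1))) = chain m (sig m j) from rfl,
        chain_eq_A (sig_lt hj), sig_invol]
    · exact absurd (Subtype.ext hy) (Ne.symm hne)
  · -- v = wV
    obtain ⟨y, hy⟩ := Sym2.mem_iff_exists.mp hv2
    have hadj : (crossedCube (m + 3 + 1)).Adj (wV (m + 3)) y := by
      have hx := x.property
      rw [hy] at hx
      exact hx
    rcases adj_wV_iff hadj with ⟨j, hj, rfl⟩ | rfl
    · refine ⟨m + 4 + tau j, Or.inr ⟨by omega, by have := tau_lt (by omega : j < m + 3); omega⟩, ?_⟩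
      apply Subtype.ext
      rw [hy, show ((chainE m (m + 4 + tau j) : (crossedCube (m + 3 + 1)).edgeSet) :
        Sym2 (CQVertex (m + 3 + 1))) = chain m (m + 4 + tau j) from rfl,
        chain_eq_B (by omega) (by have := tau_lt (by omega : j < m + 3); omega),
        show m + 4 + tau j - (m + 4) = tau j from by omega, tau_invol]
    · refine absurd (Subtype.ext ?_) (Ne.symm hne)
      rw [hy]
      exact Sym2.eq_swap
 
/-- Master lemma: a family of `M` windows of length `k` covering the `A`- and `B`-positions
of the chain yields a `P_k`-structure cut of size `M`. -/
lemma master (m k : ℕ) (hk : 4 ≤ k) (hkL : k ≤ 2 * m + 7) (M : ℕ) (st : Fin M → ℕ)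
    (hfit : ∀ t, st t + k ≤ 2 * m + 7)
    (hcov : ∀ i, (i < m + 3 ∨ (m + 4 ≤ i ∧ i < 2 * m + 7)) → ∃ t, st t ≤ i ∧ i < st t + k) :
    (BCDC (m + 3 + 1)).structConn (pathGraph k) ≤ M := by
  classical
  have hsub : ∀ t : Fin M, ∃ A : (BCDC (m + 3 + 1)).Subgraph,
      A.verts = chainE m '' Set.Ico (st t) (st t + k) ∧ Nonempty (A.coe ≃g pathGraph k) := by
    intro t
    apply exists_path_subgraph _ k (st t) (by omega) (chainE m)
    · intro i j h1 h2 h3 h4 hij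
      exact chain_inj i j (by have := hfit t; omega) (by have := hfit t; omega)
        (congrArg Subtype.val hij)
    · intro i h1 h2
      exact chainE_adj (by have := hfit t; omega)
  choose S hS1 hS2 using hsub
  apply structConn_le_of_family _ _ M S hS2
  left
  set Sc := SimpleGraph.cutVerts (Finset.image S Finset.univ) with hSc
  have hScEq : Sc = ⋃ t : Fin M, (S t).verts := cutVerts_image _ M S
  have hchain_mem : ∀ x : (crossedCube (m + 3 + 1)).edgeSet, x ∈ Sc →
      ∃ i, i < 2 * m + 7 ∧ x = chainE m i := by
    intro x hx
    rw [hScEq] at hx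
    obtain ⟨t, ht⟩ := Set.mem_iUnion.mp hx
    rw [hS1 t] at ht
    obtain ⟨i, ⟨hi1, hi2⟩, rfl⟩ := ht
    exact ⟨i, by have := hfit t; omega, rfl⟩
  have he : eE m ∈ Scᶜ := by
    intro hx
    obtain ⟨i, hi, hx⟩ := hchain_mem _ hx
    exact eE_ne_chain m i hi (congrArg Subtype.val hx)
  have hf : fE m ∈ Scᶜ := by
    intro hx
    obtain ⟨i, hi, hx⟩ := hchain_mem _ hx
    exact fE_ne_chain m i hi (congrArg Subtype.val hx)
  intro hconn
  have hre := hconn.preconnected ⟨eE m, he⟩ ⟨fE m, hf⟩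
  obtain ⟨p⟩ := hre
  have hnn : ¬ p.Nil := SimpleGraph.Walk.not_nil_of_ne (by
    intro hq
    exact eE_ne_fE m (congrArg Subtype.val hq))
  have hadj1 := p.adj_snd hnn
  have hadj2 : (BCDC (m + 3 + 1)).Adj (eE m) (p.getVert 1).val := hadj1
  obtain ⟨i, hi, hxe⟩ := nbr_eE m (p.getVert 1).val hadj2
  obtain ⟨t, ht1, ht2⟩ := hcov i hi
  have hmem : (chainE m i : (crossedCube (m + 3 + 1)).edgeSet) ∈ Sc := by
    rw [hScEq]
    exact Set.mem_iUnion.mpr ⟨t, by rw [hS1 t]; exact ⟨i, ⟨ht1, ht2⟩, rfl⟩⟩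
  exact (p.getVert 1).property (by rw [hxe]; exact hmem)

end BCDCaux

/- For `n ≥ 4` and `4 ≤ k ≤ 2n - 1`:
`κ(B_n; P_k) ≤ (2n-2)/k` if `4 ≤ k ≤ n - 1` and `k ∣ n - 1`, and
`κ(B_n; P_k) ≤ ⌈(2n-1)/k⌉` otherwise. -/
open BCDCaux in
/-- For `n ≥ 4` and `4 ≤ k ≤ 2n - 1`:
`κ(B_n; P_k) ≤ (2n-2)/k` if `4 ≤ k ≤ n - 1` and `k ∣ n - 1`, and
`κ(B_n; P_k) ≤ ⌈(2n-1)/k⌉` otherwise. -/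
theorem bcdc_path_structConn_upper (n k : ℕ) (hn : 4 ≤ n) (hk1 : 4 ≤ k)
    (hk2 : k ≤ 2 * n - 1) :
    (k ≤ n - 1 ∧ k ∣ n - 1 →
      (BCDC n).structConn (SimpleGraph.pathGraph k) ≤ (2 * n - 2) / k) ∧
    (¬ (k ≤ n - 1 ∧ k ∣ n - 1) →
      (BCDC n).structConn (SimpleGraph.pathGraph k) ≤ (2 * n - 1 + (k - 1)) / k) := by
  obtain ⟨m, rfl⟩ : ∃ m, n = m + 4 := ⟨n - 4, by omega⟩
  have hkL : k ≤ 2 * m + 7 := by omega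
  have hk0 : 0 < k := by omega
  constructor
  · rintro ⟨hk3, hdvd⟩
    obtain ⟨q, hq⟩ := hdvd
    have hq' : m + 3 = k * q := by omega
    have hgoal : (2 * (m + 4) - 2) / k = 2 * q := by
      have h2 : k * (2 * q) = 2 * (k * q) := by ring
      have h3 : 2 * (m + 4) - 2 = k * (2 * q) := by omega
      rw [h3, Nat.mul_div_cancel_left _ hk0]
    rw [hgoal]
    apply master m k hk1 hkL (2 * q)
      (fun t => if t.val < q then t.val * k else m + 4 + (t.val - q) * k)
    · intro t
      have htq : t.val < 2 * q := t.isLt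
      by_cases h : t.val < q
      · simp only [if_pos h]
        have h1 : (t.val + 1) * k ≤ q * k := Nat.mul_le_mul_right k (by omega)
        have h2 : q * k = k * q := Nat.mul_comm q k
        have h3 : (t.val + 1) * k = t.val * k + k := by ring
        omega
      · simp only [if_neg h]
        have h1 : (t.val - q + 1) * k ≤ q * k := Nat.mul_le_mul_right k (by omega)
        have h2 : q * k = k * q := Nat.mul_comm q k
        have h3 : (t.val - q + 1) * k = (t.val - q) * k + k := by ring
        omega
    · intro i hi
      rcases hi with hi | ⟨hi1, hi2⟩
      · have hlt : i / k < q := by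
          rw [Nat.div_lt_iff_lt_mul hk0]
          have := Nat.mul_comm q k
          omega
        refine ⟨⟨i / k, by omega⟩, ?_⟩
        simp only [if_pos hlt]
        have h1 := Nat.div_add_mod i k
        have h2 := Nat.mod_lt i hk0
        have h3 : k * (i / k) = (i / k) * k := Nat.mul_comm _ _
        omega
      · have hrk : (i - (m + 4)) / k < q := by
          rw [Nat.div_lt_iff_lt_mul hk0]
          have := Nat.mul_comm q k
          omega
        obtain ⟨r, hrq, hr1, hr2⟩ : ∃ r, r < q ∧ r * k ≤ i - (m + 4) ∧ i - (m + 4) < r * k + k := by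
          refine ⟨(i - (m + 4)) / k, hrk, ?_, ?_⟩
          · have h3 := Nat.mul_comm k ((i - (m + 4)) / k)
            have h1 := Nat.div_add_mod (i - (m + 4)) k
            omega
          · have h3 := Nat.mul_comm k ((i - (m + 4)) / k)
            have h1 := Nat.div_add_mod (i - (m + 4)) k
            have h2 := Nat.mod_lt (i - (m + 4)) hk0
            omega
        refine ⟨⟨q + r, by omega⟩, ?_⟩
        have hlt : ¬ (q + r < q) := by omega
        simp only [if_neg hlt]
        have h4 : q + r - q = r := by omega
        rw [h4]
        omega
  · intro _
    have hgoal : (2 * (m + 4) - 1 + (k - 1)) / k = (2 * m + 6) / k + 1 := by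
      have h1 : 2 * (m + 4) - 1 + (k - 1) = 2 * m + 6 + k := by omega
      rw [h1, Nat.add_div_right _ hk0]
    rw [hgoal]
    apply master m k hk1 hkL ((2 * m + 6) / k + 1)
      (fun t => min (t.val * k) (2 * m + 7 - k))
    · intro t
      have := min_le_right (t.val * k) (2 * m + 7 - k)
      omega
    · intro i hi
      have hi' : i < 2 * m + 7 := by rcases hi with h | h <;> omega
      have hb : i / k ≤ (2 * m + 6) / k := Nat.div_le_div_right (by omega)
      refine ⟨⟨i / k, by omega⟩, ?_⟩
      simp only
      have h1 := Nat.div_add_mod i k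
      have h2 := Nat.mod_lt i hk0
      have h3 : k * (i / k) = (i / k) * k := Nat.mul_comm _ _
      rcases le_total ((i / k) * k) (2 * m + 7 - k) with hc | hc
      · rw [min_eq_left hc]
        omega
      · rw [min_eq_right hc]
        omega
end
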